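/- arXiv:2602.14632 — 10 statements merged into one kernel-verified Lean document; each statement's English description precedes it below -/
import Mathlib

section
/- Let a < b be real numbers, k > 0, and γ ∈ (a,b). Suppose ψ ∈ L^∞(a,b) satisfies |ψ(t)| ≥ k·|t − γ| for almost every t ∈ (a,b). Then for every v ∈ L^∞(a,b) one has ‖v‖_{L^∞(a,b)} · ∫_a^b |ψ v| dλ¹ ≥ (k/8)·‖v‖_{L¹(a,b)}². -/
open MeasureTheory Set
open scoped ENNReal

/-- Let `a < b`, `k > 0`, `γ ∈ (a,b)`. Suppose `ψ ∈ L^∞(a,b)` satisfies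
`|ψ t| ≥ k|t − γ|` for a.e. `t ∈ (a,b)`. Then for every `v ∈ L^∞(a,b)`,
`‖v‖_{L^∞} · ∫_a^b |ψ v| ≥ (k/8) ‖v‖_{L¹}²`. -/
theorem stmt0 (a b k γ : ℝ) (hab : a < b) (hk : 0 < k) (hγ : γ ∈ Set.Ioo a b)
    (ψ v : ℝ → ℝ)
    (hψ : MemLp ψ ⊤ (volume.restrict (Set.Ioo a b)))
    (hψlow : ∀ᵐ t ∂(volume.restrict (Set.Ioo a b)), k * |t - γ| ≤ |ψ t|)
    (hv : MemLp v ⊤ (volume.restrict (Set.Ioo a b))) :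
    ENNReal.ofReal (k / 8) * (eLpNorm v 1 (volume.restrict (Set.Ioo a b))) ^ 2
      ≤ eLpNorm v ⊤ (volume.restrict (Set.Ioo a b))
        * ∫⁻ t in Set.Ioo a b, ENNReal.ofReal |ψ t * v t| := by
  set μ := volume.restrict (Set.Ioo a b) with hμdef
  haveI hfinμ : IsFiniteMeasure μ := by
    refine ⟨?_⟩
    rw [hμdef, Measure.restrict_apply_univ, Real.volume_Ioo]
    exact ENNReal.ofReal_lt_top
  -- integrability of v
  have hvi : Integrable v μ := memLp_one_iff_integrable.mp (hv.mono_exponent le_top)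
  -- a.e. bounds from L∞
  have hvtop : eLpNorm v ⊤ μ ≠ ⊤ := hv.2.ne
  set M : ℝ := (eLpNorm v ⊤ μ).toReal with hMdef
  have hMv : ∀ᵐ t ∂μ, |v t| ≤ M := by
    filter_upwards [enorm_ae_le_eLpNormEssSup v μ] with t ht
    have : (‖v t‖₊ : ℝ≥0∞) ≤ eLpNorm v ⊤ μ := by rwa [eLpNorm_exponent_top]
    have h2 := ENNReal.toReal_mono hvtop this
    simpa [Real.norm_eq_abs, hMdef] using h2
  have hψtop : eLpNorm ψ ⊤ μ ≠ ⊤ := hψ.2.ne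
  set Cψ : ℝ := (eLpNorm ψ ⊤ μ).toReal with hCdef
  have hMψ : ∀ᵐ t ∂μ, |ψ t| ≤ Cψ := by
    filter_upwards [enorm_ae_le_eLpNormEssSup ψ μ] with t ht
    have : (‖ψ t‖₊ : ℝ≥0∞) ≤ eLpNorm ψ ⊤ μ := by rwa [eLpNorm_exponent_top]
    have h2 := ENNReal.toReal_mono hψtop this
    simpa [Real.norm_eq_abs, hCdef] using h2
  -- ψ * v is integrable
  have hψvi : Integrable (fun t => ψ t * v t) μ := by
    refine Integrable.mono' (hvi.abs.const_mul Cψ) (hψ.1.mul hv.1) ?_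
    filter_upwards [hMψ] with t ht
    have hC : 0 ≤ Cψ := le_trans (abs_nonneg _) ht
    calc ‖ψ t * v t‖ = |ψ t| * |v t| := by rw [Real.norm_eq_abs, abs_mul]
      _ ≤ Cψ * |v t| := by
          exact mul_le_mul_of_nonneg_right ht (abs_nonneg _)
  set I : ℝ := ∫ t, |v t| ∂μ with hIdef
  set J : ℝ := ∫ t, |ψ t * v t| ∂μ with hJdef
  have hI0 : 0 ≤ I := integral_nonneg fun t => abs_nonneg _
  have hJ0 : 0 ≤ J := integral_nonneg fun t => abs_nonneg _
  -- rewrite the L¹ norm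
  have hL1 : eLpNorm v 1 μ = ENNReal.ofReal I := by
    rw [hIdef]
    have := ofReal_integral_norm_eq_lintegral_enorm hvi
    simp only [Real.norm_eq_abs] at this
    rw [this, eLpNorm_one_eq_lintegral_enorm]
  -- rewrite the lintegral
  have hLJ : (∫⁻ t, ENNReal.ofReal |ψ t * v t| ∂μ) = ENNReal.ofReal J := by
    rw [hJdef, ofReal_integral_eq_lintegral_ofReal hψvi.abs
      (Filter.Eventually.of_forall fun t => abs_nonneg _)]
  rw [hL1]
  show _ ≤ _ * ∫⁻ t, ENNReal.ofReal |ψ t * v t| ∂μ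
  rw [hLJ]
  -- trivial case: essential sup of v is zero
  by_cases hM0 : eLpNorm v ⊤ μ = 0
  · have hv0 : v =ᵐ[μ] 0 := (eLpNorm_eq_zero_iff hv.1 (by simp)).mp hM0
    have : I = 0 := by
      rw [hIdef]
      rw [integral_eq_zero_iff_of_nonneg (fun t => abs_nonneg _) hvi.abs]
      filter_upwards [hv0] with t ht
      simp [Pi.zero_apply] at ht ⊢
      simp [ht]
    simp [this]
  have hMpos : 0 < M := ENNReal.toReal_pos hM0 hvtop
  -- key real inequality
  have key : k / 8 * I ^ 2 ≤ M * J := by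
    rcases eq_or_lt_of_le hI0 with hI | hIpos
    · rw [← hI]
      nlinarith [mul_nonneg hMpos.le hJ0]
    -- the splitting argument with δ = I / (4M)
    set δ : ℝ := I / (4 * M) with hδdef
    have hδpos : 0 < δ := div_pos hIpos (by linarith)
    set s : Set ℝ := Set.Ioo (γ - δ) (γ + δ) with hsdef
    have hsm : MeasurableSet s := measurableSet_Ioo
    -- split I
    have hsplit : I = (∫ t in s, |v t| ∂μ) + ∫ t in sᶜ, |v t| ∂μ :=
      (integral_add_compl hsm hvi.abs).symm
    -- near part
    have hnear : (∫ t in s, |v t| ∂μ) ≤ M * (2 * δ) := by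
      have h1 : (∫ t in s, |v t| ∂μ) ≤ ∫ _ in s, M ∂μ := by
        refine integral_mono_ae (hvi.abs.restrict) (integrable_const _) ?_
        exact ae_restrict_of_ae hMv
      have h2 : (∫ _ in s, M ∂μ) = (μ s).toReal * M := by
        rw [setIntegral_const, smul_eq_mul]; rfl
      have h3 : μ s ≤ ENNReal.ofReal (2 * δ) := by
        calc μ s = volume (s ∩ Set.Ioo a b) := by
              rw [hμdef, Measure.restrict_apply hsm]
          _ ≤ volume s := measure_mono Set.inter_subset_left
          _ = ENNReal.ofReal (2 * δ) := by
              rw [hsdef, Real.volume_Ioo]; ring_nf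
      have h4 : (μ s).toReal ≤ 2 * δ := by
        have := ENNReal.toReal_mono ENNReal.ofReal_ne_top h3
        rwa [ENNReal.toReal_ofReal (by positivity)] at this
      calc (∫ t in s, |v t| ∂μ) ≤ (μ s).toReal * M := h1.trans_eq h2
        _ ≤ (2 * δ) * M := mul_le_mul_of_nonneg_right h4 hMpos.le
        _ = M * (2 * δ) := by ring
    -- far part
    have hfar : k * δ * (∫ t in sᶜ, |v t| ∂μ) ≤ J := by
      have h1 : (∫ t in sᶜ, k * δ * |v t| ∂μ) ≤ ∫ t in sᶜ, |ψ t * v t| ∂μ := by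
        refine integral_mono_ae ((hvi.abs.const_mul _).restrict)
          (hψvi.abs.restrict) ?_
        filter_upwards [ae_restrict_of_ae hψlow, ae_restrict_mem hsm.compl] with t ht hts
        have hdist : δ ≤ |t - γ| := by
          rw [hsdef] at hts
          simp only [Set.mem_compl_iff, Set.mem_Ioo, not_and_or, not_lt] at hts
          rcases hts with h | h
          · rw [abs_sub_comm, abs_of_nonneg (by linarith)]; linarith
          · rw [abs_of_nonneg (by linarith)]; linarith
        calc k * δ * |v t| ≤ k * |t - γ| * |v t| := by
              have : k * δ ≤ k * |t - γ| := mul_le_mul_of_nonneg_left hdist hk.le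
              exact mul_le_mul_of_nonneg_right this (abs_nonneg _)
          _ ≤ |ψ t| * |v t| := mul_le_mul_of_nonneg_right ht (abs_nonneg _)
          _ = |ψ t * v t| := (abs_mul _ _).symm
      have h2 : (∫ t in sᶜ, k * δ * |v t| ∂μ) = k * δ * ∫ t in sᶜ, |v t| ∂μ :=
        integral_const_mul _ _
      have h3 : (∫ t in sᶜ, |ψ t * v t| ∂μ) ≤ J :=
        setIntegral_le_integral hψvi.abs (Filter.Eventually.of_forall fun t => abs_nonneg _)
      linarith [h1, h2.symm.trans_le (h1.trans h3)]
    -- combine: k δ I ≤ 2 k δ² M + J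
    have hcomb : k * δ * I ≤ 2 * k * δ ^ 2 * M + J := by
      have h1 : k * δ * I = k * δ * (∫ t in s, |v t| ∂μ) + k * δ * ∫ t in sᶜ, |v t| ∂μ := by
        rw [hsplit]; ring
      have h2 : k * δ * (∫ t in s, |v t| ∂μ) ≤ k * δ * (M * (2 * δ)) :=
        mul_le_mul_of_nonneg_left hnear (by positivity)
      nlinarith
    -- substitute δ = I / (4M)
    have hδM : δ * M = I / 4 := by
      rw [hδdef]; field_simp
    have h5 := mul_le_mul_of_nonneg_right hcomb hMpos.le
    have e1 : k * δ * I * M = k / 4 * I ^ 2 := by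
      have h : k * δ * I * M = k * I * (δ * M) := by ring
      rw [h, hδM]; ring
    have e2 : (2 * k * δ ^ 2 * M + J) * M = k / 8 * I ^ 2 + J * M := by
      have h : (2 * k * δ ^ 2 * M + J) * M = 2 * k * (δ * M) ^ 2 + J * M := by ring
      rw [h, hδM]; ring
    rw [e1, e2] at h5
    linarith
  -- conclude in ENNReal
  calc ENNReal.ofReal (k / 8) * ENNReal.ofReal I ^ 2
      = ENNReal.ofReal (k / 8 * I ^ 2) := by
        rw [← ENNReal.ofReal_pow hI0, ← ENNReal.ofReal_mul (by positivity)]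
    _ ≤ ENNReal.ofReal (M * J) := ENNReal.ofReal_le_ofReal key
    _ = ENNReal.ofReal M * ENNReal.ofReal J := ENNReal.ofReal_mul hMpos.le
    _ = eLpNorm v ⊤ μ * ENNReal.ofReal J := by
        rw [hMdef, ENNReal.ofReal_toReal hvtop]
end

section
/- Let d ∈ ℕ, α > 0, p ∈ (1, d/α], and let p' = p/(p−1) be the conjugate exponent. Let L > 0, let T : ℝ^d → ℝ^d be Lipschitz continuous with constant L, and let μ be a Radon measure on ℝ^d. Then ∫_{ℝ^d} ∫_0^1 ( μ(B_r(x)) / r^{d−αp} )^{p'−1} (1/r) dλ¹(r) dμ(x) ≤ L^{(d−αp)(p'−1)} · ∫_{ℝ^d} ∫_0^L ( (T_#μ)(B_s(x)) / s^{d−αp} )^{p'−1} (1/s) dλ¹(s) d(T_#μ)(x), where both sides are interpreted as integrals of nonnegative measurable functions with values in [0,∞]. -/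
open MeasureTheory Metric Set
open scoped ENNReal

/-- Wolff-energy comparison for a pushforward measure under a
Lipschitz map `T` with constant `L`. -/
theorem stmt1 (d : ℕ) (α p p' L : ℝ) (hα : 0 < α) (hp : 1 < p) (hpd : p ≤ d / α)
    (hp' : p' = p / (p - 1)) (hL : 0 < L)
    (T : EuclideanSpace ℝ (Fin d) → EuclideanSpace ℝ (Fin d))
    (hT : LipschitzWith L.toNNReal T)
    (μ : Measure (EuclideanSpace ℝ (Fin d))) [IsFiniteMeasureOnCompacts μ] :
    (∫⁻ x, ∫⁻ r in Set.Ioo (0 : ℝ) 1,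
        (μ (Metric.closedBall x r) / ENNReal.ofReal (r ^ ((d : ℝ) - α * p))) ^ (p' - 1)
          * ENNReal.ofReal (1 / r) ∂volume ∂μ)
      ≤ ENNReal.ofReal (L ^ (((d : ℝ) - α * p) * (p' - 1)))
        * ∫⁻ x, ∫⁻ s in Set.Ioo (0 : ℝ) L,
            ((μ.map T) (Metric.closedBall x s) / ENNReal.ofReal (s ^ ((d : ℝ) - α * p)))
                ^ (p' - 1)
              * ENNReal.ofReal (1 / s) ∂volume ∂(μ.map T) := by
  set ν : Measure (EuclideanSpace ℝ (Fin d)) := μ.map T with hν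
  set β : ℝ := (d : ℝ) - α * p with hβ
  set q : ℝ := p' - 1 with hq
  have hp1 : (0 : ℝ) < p - 1 := by linarith
  have hq0 : 0 < q := by
    have : q = 1 / (p - 1) := by rw [hq, hp']; field_simp; ring
    rw [this]; positivity
  have hTm : Measurable T := hT.continuous.measurable
  haveI : SFinite ν := by rw [hν]; infer_instance
  -- measurability of the ball-measure function
  have hmb : Measurable fun zs : EuclideanSpace ℝ (Fin d) × ℝ => ν (closedBall zs.1 zs.2) := by
    have hA : MeasurableSet {pp : (EuclideanSpace ℝ (Fin d) × ℝ) × EuclideanSpace ℝ (Fin d) | dist pp.2 pp.1.1 ≤ pp.1.2} := by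
      apply measurableSet_le
      · exact measurable_dist.comp (measurable_snd.prodMk (measurable_fst.comp measurable_fst))
      · exact measurable_snd.comp measurable_fst
    have h := measurable_measure_prodMk_left (ν := ν) hA
    have heq : (fun zs : EuclideanSpace ℝ (Fin d) × ℝ => ν (closedBall zs.1 zs.2))
        = fun zs => ν (Prod.mk zs ⁻¹' {pp : (EuclideanSpace ℝ (Fin d) × ℝ) × EuclideanSpace ℝ (Fin d) | dist pp.2 pp.1.1 ≤ pp.1.2}) := by
      funext zs
      congr 1
    rw [heq]
    exact h
  -- the target inner-integral function is measurable
  set g : EuclideanSpace ℝ (Fin d) → ℝ≥0∞ := fun y =>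
    ∫⁻ s in Set.Ioo (0 : ℝ) L,
      (ν (closedBall y s) / ENNReal.ofReal (s ^ β)) ^ q * ENNReal.ofReal (1 / s) ∂volume
    with hg_def
  have hg : Measurable g := by
    apply Measurable.lintegral_prod_right'
      (f := fun zs : EuclideanSpace ℝ (Fin d) × ℝ =>
        (ν (closedBall zs.1 zs.2) / ENNReal.ofReal (zs.2 ^ β)) ^ q * ENNReal.ofReal (1 / zs.2))
    apply Measurable.mul
    · exact (hmb.div ((measurable_snd.pow measurable_const).ennreal_ofReal)).pow measurable_const
    · exact (measurable_const.div measurable_snd).ennreal_ofReal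
  -- scaling substitution lemma
  have hscale : ∀ G : ℝ → ℝ≥0∞,
      (∫⁻ r in Set.Ioo (0 : ℝ) 1, G (L * r) ∂volume)
        = ENNReal.ofReal (1 / L) * ∫⁻ s in Set.Ioo (0 : ℝ) L, G s ∂volume := by
    intro G
    have he : MeasurableEmbedding (fun r : ℝ => L * r) := measurableEmbedding_mulLeft₀ hL.ne'
    have hpre : (fun r : ℝ => L * r) ⁻¹' Set.Ioo 0 L = Set.Ioo 0 1 := by
      ext r
      simp only [Set.mem_preimage, Set.mem_Ioo]
      constructor
      · rintro ⟨h1, h2⟩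
        constructor
        · nlinarith
        · nlinarith
      · rintro ⟨h1, h2⟩
        constructor
        · nlinarith
        · nlinarith
    calc (∫⁻ r in Set.Ioo (0 : ℝ) 1, G (L * r) ∂volume)
        = ∫⁻ s, G s ∂(Measure.map (fun r : ℝ => L * r) (volume.restrict (Set.Ioo 0 1))) :=
          (he.lintegral_map G).symm
      _ = ∫⁻ s, G s ∂((volume.map (fun r : ℝ => L * r)).restrict (Set.Ioo 0 L)) := by
          rw [Measure.restrict_map he.measurable measurableSet_Ioo, hpre]
      _ = ENNReal.ofReal (1 / L) * ∫⁻ s in Set.Ioo (0 : ℝ) L, G s ∂volume := by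
          rw [Real.map_volume_mul_left hL.ne', Measure.restrict_smul, lintegral_smul_measure,
            abs_of_pos (inv_pos.mpr hL), one_div, smul_eq_mul]
  -- pointwise key estimate
  have key : ∀ x : EuclideanSpace ℝ (Fin d),
      (∫⁻ r in Set.Ioo (0 : ℝ) 1,
          (μ (closedBall x r) / ENNReal.ofReal (r ^ β)) ^ q * ENNReal.ofReal (1 / r) ∂volume)
        ≤ ENNReal.ofReal (L ^ (β * q)) * g (T x) := by
    intro x
    set G : ℝ → ℝ≥0∞ := fun s =>
      (ν (closedBall (T x) s) / ENNReal.ofReal (s ^ β)) ^ q * ENNReal.ofReal (1 / s) with hG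
    have step1 : ∀ r ∈ Set.Ioo (0 : ℝ) 1,
        (μ (closedBall x r) / ENNReal.ofReal (r ^ β)) ^ q * ENNReal.ofReal (1 / r)
          ≤ (ENNReal.ofReal (L ^ (β * q)) * ENNReal.ofReal L) * G (L * r) := by
      rintro r ⟨hr0, hr1⟩
      have hLr : 0 < L * r := by positivity
      -- measure comparison
      have hsub : closedBall x r ⊆ T ⁻¹' closedBall (T x) (L * r) := by
        intro z hz
        simp only [Set.mem_preimage, Metric.mem_closedBall] at *
        calc dist (T z) (T x) ≤ L * dist z x := by
              have := hT.dist_le_mul z x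
              rwa [Real.coe_toNNReal L hL.le] at this
          _ ≤ L * r := by nlinarith [dist_nonneg (x := z) (y := x)]
      have hmeas : μ (closedBall x r) ≤ ν (closedBall (T x) (L * r)) := by
        rw [hν, Measure.map_apply hTm measurableSet_closedBall]
        exact measure_mono hsub
      have hc0 : ENNReal.ofReal (L ^ β) ≠ 0 := by
        simp [ENNReal.ofReal_eq_zero, not_le, Real.rpow_pos_of_pos hL]
      have hct : ENNReal.ofReal (L ^ β) ≠ ⊤ := ENNReal.ofReal_ne_top
      -- denominator identity
      have h2 : ENNReal.ofReal ((L * r) ^ β)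
          = ENNReal.ofReal (L ^ β) * ENNReal.ofReal (r ^ β) := by
        rw [Real.mul_rpow hL.le hr0.le, ENNReal.ofReal_mul (Real.rpow_nonneg hL.le β)]
      have h3 : ν (closedBall (T x) (L * r)) / ENNReal.ofReal (r ^ β)
          = ENNReal.ofReal (L ^ β) * (ν (closedBall (T x) (L * r)) / ENNReal.ofReal ((L * r) ^ β)) := by
        rw [h2, ← mul_div_assoc, ENNReal.mul_div_mul_left _ _ hc0 hct]
      have h5 : ENNReal.ofReal (1 / r) = ENNReal.ofReal L * ENNReal.ofReal (1 / (L * r)) := by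
        rw [← ENNReal.ofReal_mul hL.le]
        congr 1
        field_simp
      calc (μ (closedBall x r) / ENNReal.ofReal (r ^ β)) ^ q * ENNReal.ofReal (1 / r)
          ≤ (ν (closedBall (T x) (L * r)) / ENNReal.ofReal (r ^ β)) ^ q
              * ENNReal.ofReal (1 / r) := by
            gcongr
        _ = (ENNReal.ofReal (L ^ β)
              * (ν (closedBall (T x) (L * r)) / ENNReal.ofReal ((L * r) ^ β))) ^ q
              * (ENNReal.ofReal L * ENNReal.ofReal (1 / (L * r))) := by rw [h3, h5]
        _ = (ENNReal.ofReal (L ^ (β * q)) * ENNReal.ofReal L) * G (L * r) := by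
            rw [ENNReal.mul_rpow_of_nonneg _ _ hq0.le,
              ENNReal.ofReal_rpow_of_pos (Real.rpow_pos_of_pos hL β),
              ← Real.rpow_mul hL.le]
            simp only [hG]
            ring
    calc (∫⁻ r in Set.Ioo (0 : ℝ) 1,
            (μ (closedBall x r) / ENNReal.ofReal (r ^ β)) ^ q * ENNReal.ofReal (1 / r) ∂volume)
        ≤ ∫⁻ r in Set.Ioo (0 : ℝ) 1,
            (ENNReal.ofReal (L ^ (β * q)) * ENNReal.ofReal L) * G (L * r) ∂volume := by
          apply lintegral_mono_ae
          exact (ae_restrict_iff' measurableSet_Ioo).2 (Filter.Eventually.of_forall step1)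
      _ = (ENNReal.ofReal (L ^ (β * q)) * ENNReal.ofReal L)
            * ∫⁻ r in Set.Ioo (0 : ℝ) 1, G (L * r) ∂volume :=
          lintegral_const_mul' _ _ (ENNReal.mul_ne_top ENNReal.ofReal_ne_top ENNReal.ofReal_ne_top)
      _ = (ENNReal.ofReal (L ^ (β * q)) * ENNReal.ofReal L)
            * (ENNReal.ofReal (1 / L) * ∫⁻ s in Set.Ioo (0 : ℝ) L, G s ∂volume) := by
          rw [hscale G]
      _ = ENNReal.ofReal (L ^ (β * q)) * g (T x) := by
          rw [hg_def]
          have : ENNReal.ofReal L * ENNReal.ofReal (1 / L) = 1 := by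
            rw [← ENNReal.ofReal_mul hL.le, mul_one_div, div_self hL.ne', ENNReal.ofReal_one]
          calc (ENNReal.ofReal (L ^ (β * q)) * ENNReal.ofReal L)
                * (ENNReal.ofReal (1 / L) * ∫⁻ s in Set.Ioo (0 : ℝ) L, G s ∂volume)
              = ENNReal.ofReal (L ^ (β * q)) * ((ENNReal.ofReal L * ENNReal.ofReal (1 / L))
                * ∫⁻ s in Set.Ioo (0 : ℝ) L, G s ∂volume) := by ring
            _ = _ := by rw [this, one_mul]
  calc (∫⁻ x, ∫⁻ r in Set.Ioo (0 : ℝ) 1,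
          (μ (closedBall x r) / ENNReal.ofReal (r ^ β)) ^ q * ENNReal.ofReal (1 / r) ∂volume ∂μ)
      ≤ ∫⁻ x, ENNReal.ofReal (L ^ (β * q)) * g (T x) ∂μ := lintegral_mono key
    _ = ENNReal.ofReal (L ^ (β * q)) * ∫⁻ x, g (T x) ∂μ :=
        lintegral_const_mul' _ _ ENNReal.ofReal_ne_top
    _ = ENNReal.ofReal (L ^ (β * q)) * ∫⁻ y, g y ∂ν := by
        rw [hν, lintegral_map hg hTm]
    _ = _ := rfl
end

section
/- Let d ∈ ℕ, p' ∈ (1,∞), L > 0, and ε > 0. Let ν be a Radon measure on ℝ^d and let g : ℝ^d → [0,∞] be Borel measurable with g(−x) = g(x) for all x ∈ ℝ^d and g(x) ≥ ε whenever |x| ≤ 2L. Then ∫_{ℝ^d} ((g ⋆ ν)(y))^{p'} dλ^d(y) ≥ ε^{p'} · L^d · λ^d(B_1(0)) · ∫_{ℝ^d} ν(B_L(x))^{p'−1} dν(x). -/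
open MeasureTheory Metric Set
open scoped ENNReal

/-- Lower bound for the `p'`-energy of the convolution `g ⋆ ν` of a
symmetric kernel `g` (bounded below by `ε` on the ball of radius `2L`) with a Radon
measure `ν`. -/
theorem stmt2 (d : ℕ) (p' L ε : ℝ) (hp'1 : 1 < p')
    (hL : 0 < L) (hε : 0 < ε)
    (ν : Measure (EuclideanSpace ℝ (Fin d))) [IsFiniteMeasureOnCompacts ν]
    (g : EuclideanSpace ℝ (Fin d) → ℝ≥0∞) (hg : Measurable g)
    (hsymm : ∀ x, g (-x) = g x)
    (hge : ∀ x : EuclideanSpace ℝ (Fin d), ‖x‖ ≤ 2 * L → ENNReal.ofReal ε ≤ g x) :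
    ENNReal.ofReal (ε ^ p') * ENNReal.ofReal (L ^ d)
        * volume (Metric.closedBall (0 : EuclideanSpace ℝ (Fin d)) 1)
        * ∫⁻ x, (ν (Metric.closedBall x L)) ^ (p' - 1) ∂ν
      ≤ ∫⁻ y, (∫⁻ z, g (y - z) ∂ν) ^ p' ∂volume := by
  have hgs : Measurable fun q : (EuclideanSpace ℝ (Fin d)) × (EuclideanSpace ℝ (Fin d)) =>
      g (q.1 - q.2) := hg.comp (measurable_fst.sub measurable_snd)
  set Φ : EuclideanSpace ℝ (Fin d) → ℝ≥0∞ := fun y => ∫⁻ z, g (y - z) ∂ν with hΦdef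
  have hΦ : Measurable Φ := Measurable.lintegral_prod_right hgs
  have hp0 : (0:ℝ) ≤ p' - 1 := by linarith
  -- measurability of the integrand in the product
  have hmeas : Measurable fun q : (EuclideanSpace ℝ (Fin d)) × (EuclideanSpace ℝ (Fin d)) =>
      Φ q.1 ^ (p' - 1) * g (q.1 - q.2) :=
    ((hΦ.comp measurable_fst).pow measurable_const).mul hgs
  -- Tonelli: rewrite the RHS
  have key : ∫⁻ y, Φ y ^ p' ∂volume
      = ∫⁻ z, ∫⁻ y, Φ y ^ (p' - 1) * g (y - z) ∂volume ∂ν := by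
    rw [← lintegral_lintegral_swap hmeas.aemeasurable]
    refine lintegral_congr fun y => ?_
    have hgy : Measurable fun w : EuclideanSpace ℝ (Fin d) => g (y - w) :=
      hg.comp (measurable_const.sub measurable_id)
    rw [lintegral_const_mul _ hgy]
    have h := ENNReal.rpow_add_of_nonneg (x := Φ y) (p' - 1) 1 hp0 zero_le_one
    rw [ENNReal.rpow_one, sub_add_cancel] at h
    exact h
  rw [key]
  -- pointwise lower bound on the inner integral
  have hB : ∀ z : EuclideanSpace ℝ (Fin d),
      ENNReal.ofReal ε ^ (p' - 1) * ν (Metric.closedBall z L) ^ (p' - 1)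
          * ENNReal.ofReal ε * volume (Metric.closedBall z L)
        ≤ ∫⁻ y, Φ y ^ (p' - 1) * g (y - z) ∂volume := by
    intro z
    have hΦlb : ∀ y ∈ Metric.closedBall z L,
        ENNReal.ofReal ε * ν (Metric.closedBall z L) ≤ Φ y := by
      intro y hy
      have h1 : ENNReal.ofReal ε * ν (Metric.closedBall z L)
          = ∫⁻ w in Metric.closedBall z L, ENNReal.ofReal ε ∂ν := by
        rw [setLIntegral_const, mul_comm]
      rw [h1]
      have hgy : Measurable fun w : EuclideanSpace ℝ (Fin d) => g (y - w) :=
        hg.comp (measurable_const.sub measurable_id)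
      refine le_trans (setLIntegral_mono hgy
        fun w hw => ?_) (setLIntegral_le_lintegral _ _)
      refine hge (y - w) ?_
      have : dist y w ≤ dist y z + dist z w := dist_triangle y z w
      rw [Metric.mem_closedBall] at hy hw
      rw [← dist_eq_norm]
      calc dist y w ≤ dist y z + dist z w := dist_triangle y z w
        _ ≤ L + L := add_le_add hy (by rwa [dist_comm])
        _ = 2 * L := by ring
    calc ENNReal.ofReal ε ^ (p' - 1) * ν (Metric.closedBall z L) ^ (p' - 1)
          * ENNReal.ofReal ε * volume (Metric.closedBall z L)
        = ∫⁻ _ in Metric.closedBall z L,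
            ENNReal.ofReal ε ^ (p' - 1) * ν (Metric.closedBall z L) ^ (p' - 1)
              * ENNReal.ofReal ε ∂volume := by
          rw [setLIntegral_const, mul_comm _ (volume _)]
      _ ≤ ∫⁻ y in Metric.closedBall z L, Φ y ^ (p' - 1) * g (y - z) ∂volume := by
          have hgz : Measurable fun y : EuclideanSpace ℝ (Fin d) => g (y - z) :=
            hg.comp (measurable_id.sub measurable_const)
          refine setLIntegral_mono
            ((hΦ.pow measurable_const).mul hgz) fun y hy => ?_
          have h2 : ENNReal.ofReal ε ≤ g (y - z) := by
            refine hge (y - z) ?_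
            rw [← dist_eq_norm]
            rw [Metric.mem_closedBall] at hy
            linarith
          have h3 : ENNReal.ofReal ε ^ (p' - 1) * ν (Metric.closedBall z L) ^ (p' - 1)
              ≤ Φ y ^ (p' - 1) := by
            rw [← ENNReal.mul_rpow_of_nonneg _ _ hp0]
            exact ENNReal.rpow_le_rpow (hΦlb y hy) hp0
          exact mul_le_mul' h3 h2
      _ ≤ ∫⁻ y, Φ y ^ (p' - 1) * g (y - z) ∂volume := setLIntegral_le_lintegral _ _
  -- put the constants together
  have hvol : ∀ z : EuclideanSpace ℝ (Fin d), volume (Metric.closedBall z L)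
      = ENNReal.ofReal (L ^ d) * volume (Metric.closedBall (0:EuclideanSpace ℝ (Fin d)) 1) := by
    intro z
    rw [Measure.addHaar_closedBall' volume z hL.le]
    congr 2
    simp [finrank_euclideanSpace_fin]
  have hεp : ENNReal.ofReal ε ^ (p' - 1) * ENNReal.ofReal ε = ENNReal.ofReal (ε ^ p') := by
    have h := ENNReal.rpow_add_of_nonneg (x := ENNReal.ofReal ε) (p' - 1) 1 hp0 zero_le_one
    rw [ENNReal.rpow_one, sub_add_cancel] at h
    rw [← h, ENNReal.ofReal_rpow_of_pos hε]
  have hC : (ENNReal.ofReal (ε ^ p') * ENNReal.ofReal (L ^ d)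
      * volume (Metric.closedBall (0:EuclideanSpace ℝ (Fin d)) 1)) ≠ ∞ :=
    ENNReal.mul_ne_top (ENNReal.mul_ne_top ENNReal.ofReal_ne_top ENNReal.ofReal_ne_top)
      measure_closedBall_lt_top.ne
  calc ENNReal.ofReal (ε ^ p') * ENNReal.ofReal (L ^ d)
        * volume (Metric.closedBall (0:EuclideanSpace ℝ (Fin d)) 1)
        * ∫⁻ x, ν (Metric.closedBall x L) ^ (p' - 1) ∂ν
      = ∫⁻ z, ENNReal.ofReal (ε ^ p') * ENNReal.ofReal (L ^ d)
          * volume (Metric.closedBall (0:EuclideanSpace ℝ (Fin d)) 1)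
          * ν (Metric.closedBall z L) ^ (p' - 1) ∂ν := by
        rw [lintegral_const_mul' _ _ hC]
    _ ≤ ∫⁻ z, ∫⁻ y, Φ y ^ (p' - 1) * g (y - z) ∂volume ∂ν := by
        refine lintegral_mono fun z => ?_
        refine le_trans (le_of_eq ?_) (hB z)
        rw [hvol z, ← hεp]
        ring
end

section
/- Let d ∈ ℕ and let g : ℝ^d → [0,∞] be Borel measurable with g(−x) = g(x) for all x ∈ ℝ^d. Define (g ⋆ g)(z) := ∫_{ℝ^d} g(z − w) g(w) dλ^d(w) and assume there is a nonincreasing function f : [0,∞) → [0,∞] with (g ⋆ g)(z) = f(|z|) for all z ∈ ℝ^d. Let T : ℝ^d → ℝ^d be Lipschitz continuous with constant 1 and let μ be a Radon measure on ℝ^d. Then ∫_{ℝ^d} ((g ⋆ μ)(x))² dλ^d(x) ≤ ∫_{ℝ^d} ((g ⋆ (T_#μ))(x))² dλ^d(x), where both sides are interpreted as integrals with values in [0,∞]. -/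
open MeasureTheory Metric Set
open scoped ENNReal

/-- If the self-convolution `g ⋆ g` of a symmetric kernel `g` is a
nonincreasing function of the norm and `T` is `1`-Lipschitz, then the `L²`-energy of
`g ⋆ μ` is bounded by that of `g ⋆ (T_#μ)` for every Radon measure `μ`. -/
theorem stmt5 (d : ℕ) (g : EuclideanSpace ℝ (Fin d) → ℝ≥0∞) (hg : Measurable g)
    (hsymm : ∀ x, g (-x) = g x)
    (f : ℝ → ℝ≥0∞) (hf : ∀ ⦃s t : ℝ⦄, 0 ≤ s → s ≤ t → f t ≤ f s)
    (hgg : ∀ z : EuclideanSpace ℝ (Fin d), ∫⁻ w, g (z - w) * g w ∂volume = f ‖z‖)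
    (T : EuclideanSpace ℝ (Fin d) → EuclideanSpace ℝ (Fin d)) (hT : LipschitzWith 1 T)
    (μ : Measure (EuclideanSpace ℝ (Fin d))) [IsFiniteMeasureOnCompacts μ] :
    ∫⁻ x, (∫⁻ y, g (x - y) ∂μ) ^ 2 ∂volume
      ≤ ∫⁻ x, (∫⁻ y, g (x - y) ∂(μ.map T)) ^ 2 ∂volume := by
  have hTm : Measurable T := hT.continuous.measurable
  -- F z = (g ⋆ g)(z)
  set F : EuclideanSpace ℝ (Fin d) → ℝ≥0∞ := fun z => ∫⁻ w, g (z - w) * g w ∂volume with hF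
  have hFm : Measurable F := by
    apply Measurable.lintegral_prod_right' (f := fun p : _ × _ => g (p.1 - p.2) * g p.2)
    exact ((hg.comp (measurable_fst.sub measurable_snd)).mul (hg.comp measurable_snd))
  -- key identity for any s-finite ν
  have key : ∀ (ν : Measure (EuclideanSpace ℝ (Fin d))), SFinite ν →
      ∫⁻ x, (∫⁻ y, g (x - y) ∂ν) ^ 2 ∂volume = ∫⁻ y, ∫⁻ y', F (y - y') ∂ν ∂ν := by
    intro ν hν
    have hmeas : ∀ x : EuclideanSpace ℝ (Fin d),
        Measurable fun y : EuclideanSpace ℝ (Fin d) => g (x - y) :=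
      fun x => hg.comp (measurable_const.sub measurable_id)
    have step1 : ∀ x : EuclideanSpace ℝ (Fin d),
        (∫⁻ y, g (x - y) ∂ν) ^ 2 = ∫⁻ y, ∫⁻ y', g (x - y) * g (x - y') ∂ν ∂ν := by
      intro x
      rw [sq, ← lintegral_mul_const _ (hmeas x)]
      congr 1
      ext y
      rw [← lintegral_const_mul _ (hmeas x)]
    simp_rw [step1]
    have hm2 : Measurable fun p : (EuclideanSpace ℝ (Fin d)) ×
        ((EuclideanSpace ℝ (Fin d)) × (EuclideanSpace ℝ (Fin d))) =>
        g (p.1 - p.2.1) * g (p.1 - p.2.2) :=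
      ((hg.comp (measurable_fst.sub (measurable_snd.fst))).mul
        (hg.comp (measurable_fst.sub (measurable_snd.snd))))
    have hm3 : Measurable fun p : (EuclideanSpace ℝ (Fin d)) × (EuclideanSpace ℝ (Fin d)) =>
        F (p.1 - p.2) := hFm.comp (measurable_fst.sub measurable_snd)
    have inner_eq : ∀ y y' : EuclideanSpace ℝ (Fin d),
        ∫⁻ x, g (x - y) * g (x - y') ∂volume = F (y - y') := by
      intro y y'
      calc ∫⁻ x, g (x - y) * g (x - y') ∂volume
          = ∫⁻ x, g ((x + y') - y) * g ((x + y') - y') ∂volume := by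
            exact (lintegral_add_right_eq_self
              (fun x => g (x - y) * g (x - y')) y').symm
        _ = ∫⁻ x, g ((y - y') - x) * g x ∂volume := by
            congr 1; ext x
            have h1 : x + y' - y = -((y - y') - x) := by abel
            have h2 : x + y' - y' = x := by abel
            rw [h1, h2, hsymm]
        _ = F (y - y') := rfl
    calc ∫⁻ x, ∫⁻ y, ∫⁻ y', g (x - y) * g (x - y') ∂ν ∂ν ∂volume
        = ∫⁻ x, ∫⁻ p : _ × _, g (x - p.1) * g (x - p.2) ∂ν.prod ν ∂volume := by
          congr 1; ext x
          exact (lintegral_prod _ (((hg.comp (measurable_const.sub measurable_fst)).mul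
            (hg.comp (measurable_const.sub measurable_snd))).aemeasurable)).symm
      _ = ∫⁻ p : _ × _, ∫⁻ x, g (x - p.1) * g (x - p.2) ∂volume ∂ν.prod ν :=
          lintegral_lintegral_swap (μ := volume) (ν := ν.prod ν)
            (f := fun x p => g (x - p.1) * g (x - p.2)) hm2.aemeasurable
      _ = ∫⁻ p : _ × _, F (p.1 - p.2) ∂ν.prod ν := by
          congr 1; ext p; exact inner_eq p.1 p.2
      _ = ∫⁻ y, ∫⁻ y', F (y - y') ∂ν ∂ν := lintegral_prod _ hm3.aemeasurable
  have hSF : SFinite μ := inferInstance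
  have hSFT : SFinite (μ.map T) := inferInstance
  rw [key μ hSF, key (μ.map T) hSFT]
  -- rewrite RHS as double integral over μ
  have hFsub : Measurable fun p : (EuclideanSpace ℝ (Fin d)) × (EuclideanSpace ℝ (Fin d)) =>
      F (p.1 - p.2) := hFm.comp (measurable_fst.sub measurable_snd)
  rw [lintegral_map ?_ hTm]
  · have : ∀ y, ∫⁻ y', F (T y - y') ∂(μ.map T) = ∫⁻ y', F (T y - T y') ∂μ := fun y =>
      lintegral_map (hFm.comp (measurable_const.sub measurable_id)) hTm
    simp_rw [this]
    -- pointwise comparison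
    refine lintegral_mono fun y => lintegral_mono fun y' => ?_
    have hdist : ‖T y - T y'‖ ≤ ‖y - y'‖ := by
      have := hT.dist_le_mul y y'
      simpa [dist_eq_norm] using this
    calc F (y - y') = f ‖y - y'‖ := hgg _
      _ ≤ f ‖T y - T y'‖ := hf (norm_nonneg _) hdist
      _ = F (T y - T y') := (hgg _).symm
  · exact hFsub.lintegral_prod_right'
end

section
/- Let d ≥ 2, let B ⊂ ℝ^{d−1} be a Borel set, let I = (a,b) ⊂ ℝ be a bounded open interval, and let k > 0. Let φ : B × I → ℝ and γ : B → (a,b) be Borel measurable with |φ(x,y)| ≥ k·|y − γ(x)| for almost every (x,y) ∈ B × I. Let v ∈ L^∞(B × I) and define ṽ(x) := ∫_a^b v(x,y) dλ¹(y) for x ∈ B. Then ‖v‖_{L^∞(B×I)} · ∫_{B×I} |φ v| dλ^d ≥ (k/8) · ∫_B ṽ(x)² dλ^{d−1}(x). -/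
open MeasureTheory Set
lemma oneDim {k Mr c : ℝ} (hk : 0 < k) (hM : 0 < Mr) {a b : ℝ}
    (w ψ : ℝ → ℝ) (hw : Measurable w) (hψ : Measurable ψ)
    (hwb : ∀ᵐ y ∂(volume.restrict (Ioo a b)), |w y| ≤ Mr)
    (hψb : ∀ᵐ y ∂(volume.restrict (Ioo a b)), k * |y - c| ≤ |ψ y|) :
    ENNReal.ofReal (k / 8) * ENNReal.ofReal ((∫ y in Ioo a b, w y) ^ 2)
      ≤ ENNReal.ofReal Mr * ∫⁻ y in Ioo a b, ENNReal.ofReal |ψ y * w y| := by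
  set T := ∫ y in Ioo a b, w y with hT
  rcases eq_or_ne T 0 with h0 | h0
  · simp [h0]
  have hTpos : 0 < |T| := abs_pos.2 h0
  set δ : ℝ := |T| / (4 * Mr) with hδdef
  have hδ : 0 < δ := div_pos hTpos (by linarith)
  set J : Set ℝ := Ioo (c - δ) (c + δ) with hJdef
  have hJm : MeasurableSet J := measurableSet_Ioo
  -- integrability of w on Ioo a b
  have hconst : IntegrableOn (fun _ : ℝ => Mr) (Ioo a b) volume :=
    integrableOn_const measure_Ioo_lt_top.ne
  have hwint : IntegrableOn w (Ioo a b) volume := by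
    refine hconst.mono' hw.aestronglyMeasurable ?_
    filter_upwards [hwb] with y hy
    simpa [Real.norm_eq_abs] using hy
  have habs : IntegrableOn (fun y => |w y|) (Ioo a b) volume := hwint.abs
  -- split
  have hsplit : (∫ y in Ioo a b ∩ J, |w y|) + (∫ y in Ioo a b \ J, |w y|)
      = ∫ y in Ioo a b, |w y| := integral_inter_add_diff hJm habs
  -- near bound
  have hvolJ : (volume (Ioo a b ∩ J)).toReal ≤ 2 * δ := by
    have h1 : volume (Ioo a b ∩ J) ≤ volume J := measure_mono inter_subset_right
    have h2 : volume J = ENNReal.ofReal (2 * δ) := by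
      rw [hJdef, Real.volume_Ioo]; ring_nf
    rw [h2] at h1
    exact ENNReal.toReal_le_of_le_ofReal (by positivity) h1
  have hnear : (∫ y in Ioo a b ∩ J, |w y|) ≤ Mr * (2 * δ) := by
    have hb' : ∀ᵐ y ∂(volume.restrict (Ioo a b ∩ J)), |w y| ≤ Mr :=
      ae_mono (Measure.restrict_mono inter_subset_left le_rfl) hwb
    have h1 : (∫ y in Ioo a b ∩ J, |w y|) ≤ ∫ _ in Ioo a b ∩ J, Mr :=
      integral_mono_ae (habs.mono_set inter_subset_left)
        (hconst.mono_set inter_subset_left) hb'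
    rw [setIntegral_const] at h1
    calc (∫ y in Ioo a b ∩ J, |w y|) ≤ (volume (Ioo a b ∩ J)).toReal • Mr := h1
      _ ≤ (2 * δ) * Mr := by
          exact mul_le_mul_of_nonneg_right hvolJ hM.le
      _ = Mr * (2 * δ) := by ring
  have hM2δ : Mr * (2 * δ) = |T| / 2 := by
    rw [hδdef]; field_simp; ring
  have hTle : |T| ≤ ∫ y in Ioo a b, |w y| := by
    simpa [Real.norm_eq_abs] using norm_integral_le_integral_norm (μ := volume.restrict (Ioo a b)) w
  have hfar : |T| / 2 ≤ ∫ y in Ioo a b \ J, |w y| := by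
    rw [hM2δ] at hnear; linarith
  -- far pointwise bound
  have hfae : ∀ᵐ y ∂(volume.restrict (Ioo a b \ J)),
      ENNReal.ofReal (k * δ) * ENNReal.ofReal |w y| ≤ ENNReal.ofReal |ψ y * w y| := by
    have hψb' : ∀ᵐ y ∂(volume.restrict (Ioo a b \ J)), k * |y - c| ≤ |ψ y| :=
      ae_mono (Measure.restrict_mono diff_subset le_rfl) hψb
    have hmem : ∀ᵐ y ∂(volume.restrict (Ioo a b \ J)), y ∈ Ioo a b \ J :=
      ae_restrict_mem (measurableSet_Ioo.diff hJm)
    filter_upwards [hψb', hmem] with y h1 h2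
    have hyc : δ ≤ |y - c| := by
      have : y ∉ J := h2.2
      rw [hJdef, mem_Ioo, not_and_or] at this
      rcases this with h | h
      · push_neg at h
        rw [abs_sub_comm, le_abs]; left; linarith
      · push_neg at h
        rw [le_abs]; left; linarith
    have : k * δ * |w y| ≤ |ψ y * w y| := by
      rw [abs_mul]
      calc k * δ * |w y| ≤ (k * |y - c|) * |w y| := by
            have := mul_le_mul_of_nonneg_left hyc hk.le
            exact mul_le_mul_of_nonneg_right this (abs_nonneg _)
        _ ≤ |ψ y| * |w y| := mul_le_mul_of_nonneg_right h1 (abs_nonneg _)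
    calc ENNReal.ofReal (k * δ) * ENNReal.ofReal |w y|
        = ENNReal.ofReal (k * δ * |w y|) := (ENNReal.ofReal_mul (by positivity)).symm
      _ ≤ ENNReal.ofReal |ψ y * w y| := ENNReal.ofReal_le_ofReal this
  -- chain of lintegral bounds
  have hchain : ENNReal.ofReal (k * δ) * ENNReal.ofReal (|T| / 2)
      ≤ ∫⁻ y in Ioo a b, ENNReal.ofReal |ψ y * w y| := by
    have h1 : (∫⁻ y in Ioo a b \ J, ENNReal.ofReal |ψ y * w y|)
        ≤ ∫⁻ y in Ioo a b, ENNReal.ofReal |ψ y * w y| :=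
      lintegral_mono' (Measure.restrict_mono diff_subset le_rfl) le_rfl
    have h2 : (∫⁻ y in Ioo a b \ J, ENNReal.ofReal (k * δ) * ENNReal.ofReal |w y|)
        ≤ ∫⁻ y in Ioo a b \ J, ENNReal.ofReal |ψ y * w y| := lintegral_mono_ae hfae
    have h3 : (∫⁻ y in Ioo a b \ J, ENNReal.ofReal (k * δ) * ENNReal.ofReal |w y|)
        = ENNReal.ofReal (k * δ) * ∫⁻ y in Ioo a b \ J, ENNReal.ofReal |w y| :=
      lintegral_const_mul' _ _ ENNReal.ofReal_ne_top
    have h4 : (∫⁻ y in Ioo a b \ J, ENNReal.ofReal |w y|)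
        = ENNReal.ofReal (∫ y in Ioo a b \ J, |w y|) := by
      rw [ofReal_integral_eq_lintegral_ofReal (habs.mono_set diff_subset)
        (Filter.Eventually.of_forall fun y => abs_nonneg _)]
    calc ENNReal.ofReal (k * δ) * ENNReal.ofReal (|T| / 2)
        ≤ ENNReal.ofReal (k * δ) * ENNReal.ofReal (∫ y in Ioo a b \ J, |w y|) :=
          mul_le_mul_right (ENNReal.ofReal_le_ofReal hfar) _
      _ = ∫⁻ y in Ioo a b \ J, ENNReal.ofReal (k * δ) * ENNReal.ofReal |w y| := by
          rw [h3, h4]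
      _ ≤ _ := h2.trans h1
  -- conclude
  have harith : Mr * (k * δ * (|T| / 2)) = k / 8 * T ^ 2 := by
    rw [hδdef]
    field_simp
    linear_combination 8 * abs_mul_abs_self T
  calc ENNReal.ofReal (k / 8) * ENNReal.ofReal (T ^ 2)
      = ENNReal.ofReal (k / 8 * T ^ 2) := (ENNReal.ofReal_mul (by positivity)).symm
    _ = ENNReal.ofReal (Mr * (k * δ * (|T| / 2))) := by rw [harith]
    _ = ENNReal.ofReal Mr * (ENNReal.ofReal (k * δ) * ENNReal.ofReal (|T| / 2)) := by
        rw [ENNReal.ofReal_mul hM.le, ENNReal.ofReal_mul (by positivity)]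
    _ ≤ ENNReal.ofReal Mr * ∫⁻ y in Ioo a b, ENNReal.ofReal |ψ y * w y| :=
        mul_le_mul_right hchain _

/-- Localized version of the one-dimensional growth estimate:
identifying `ℝ^d` with `ℝ^{d−1} × ℝ`, if `|φ(x,y)| ≥ k|y − γ(x)|` a.e. on `B × (a,b)`,
then `‖v‖_{L^∞(B×I)} ∫_{B×I} |φ v| dλ^d ≥ (k/8) ∫_B ṽ(x)² dλ^{d−1}(x)`,
where `ṽ(x) = ∫_a^b v(x,y) dy`. -/
theorem stmt6 (d : ℕ) (hd : 2 ≤ d)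
    (B : Set (EuclideanSpace ℝ (Fin (d - 1)))) (hB : MeasurableSet B)
    (a b k : ℝ) (hab : a < b) (hk : 0 < k)
    (φ v : EuclideanSpace ℝ (Fin (d - 1)) × ℝ → ℝ)
    (γ : EuclideanSpace ℝ (Fin (d - 1)) → ℝ)
    (hγmeas : Measurable γ) (hγ : ∀ x ∈ B, γ x ∈ Set.Ioo a b)
    (hφmeas : Measurable φ)
    (hφ : ∀ᵐ z ∂(volume.restrict (B ×ˢ Set.Ioo a b)), k * |z.2 - γ z.1| ≤ |φ z|)
    (hv : MemLp v ⊤ (volume.restrict (B ×ˢ Set.Ioo a b))) :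
    ENNReal.ofReal (k / 8)
        * ∫⁻ x in B, ENNReal.ofReal ((∫ y in Set.Ioo a b, v (x, y)) ^ 2) ∂volume
      ≤ eLpNorm v ⊤ (volume.restrict (B ×ˢ Set.Ioo a b))
        * ∫⁻ z in B ×ˢ Set.Ioo a b, ENNReal.ofReal |φ z * v z| := by
  set μ := volume.restrict (B ×ˢ Set.Ioo a b) with hμdef
  have hμprod : μ = (volume.restrict B).prod (volume.restrict (Set.Ioo a b)) := by
    rw [hμdef, Measure.volume_eq_prod, Measure.prod_restrict]
  set M := eLpNorm v ⊤ μ with hMdef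
  by_cases hM0 : M = 0
  · -- trivial case: v = 0 a.e.
    have hv0 : ∀ᵐ z ∂μ, v z = 0 := by
      have := (eLpNorm_eq_zero_iff hv.1 (by simp)).1 hM0
      exact this
    have hslice : ∀ᵐ x ∂(volume.restrict B), (∫ y in Set.Ioo a b, v (x, y)) = 0 := by
      have h := Measure.ae_ae_of_ae_prod (hμprod ▸ hv0)
      filter_upwards [h] with x hx
      rw [integral_congr_ae hx, integral_zero]
    have hL : (∫⁻ x in B, ENNReal.ofReal ((∫ y in Set.Ioo a b, v (x, y)) ^ 2) ∂volume) = 0 := by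
      rw [lintegral_congr_ae (g := fun _ => 0)]
      · exact lintegral_zero
      · filter_upwards [hslice] with x hx; simp [hx]
    rw [hL, mul_zero]
    exact zero_le
  · have hMtop : M ≠ ⊤ := hv.2.ne
    set Mr := M.toReal with hMrdef
    have hMr : 0 < Mr := ENNReal.toReal_pos hM0 hMtop
    -- measurable representative
    set v' := hv.1.mk v with hv'def
    have hv'm : Measurable v' := hv.1.stronglyMeasurable_mk.measurable
    have hvv' : ∀ᵐ z ∂μ, v z = v' z := hv.1.ae_eq_mk
    -- bound
    have hbd : ∀ᵐ z ∂μ, |v' z| ≤ Mr := by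
      have h1 : ∀ᵐ z ∂μ, (‖v z‖₊ : ENNReal) ≤ eLpNormEssSup v μ := ae_le_eLpNormEssSup
      filter_upwards [h1, hvv'] with z h1 h2
      rw [← h2]
      have : (‖v z‖₊ : ENNReal) ≤ M := by rwa [hMdef, eLpNorm_exponent_top]
      have h3 := ENNReal.toReal_mono hMtop this
      simpa [Real.norm_eq_abs] using h3
    -- combined slicewise a.e. facts
    have key : ∀ᵐ x ∂(volume.restrict B),
        ∀ᵐ y ∂(volume.restrict (Set.Ioo a b)),
          (k * |y - γ x| ≤ |φ (x, y)| ∧ |v' (x, y)| ≤ Mr) ∧ v (x, y) = v' (x, y) :=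
      Measure.ae_ae_of_ae_prod (hμprod ▸ ((hφ.and hbd).and hvv'))
    -- RHS via Tonelli
    have hfm : Measurable (fun z : EuclideanSpace ℝ (Fin (d - 1)) × ℝ =>
        ENNReal.ofReal |φ z * v' z|) := ((hφmeas.mul hv'm).abs).ennreal_ofReal
    have hRHS : (∫⁻ z, ENNReal.ofReal |φ z * v z| ∂μ)
        = ∫⁻ x in B, ∫⁻ y in Set.Ioo a b, ENNReal.ofReal |φ (x, y) * v' (x, y)| ∂volume ∂volume := by
      rw [lintegral_congr_ae (g := fun z => ENNReal.ofReal |φ z * v' z|)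
        (by filter_upwards [hvv'] with z hz; rw [hz]), hμprod,
        lintegral_prod _ hfm.aemeasurable]
    rw [hμdef] at hRHS
    rw [hRHS]
    -- pointwise inequality
    have hpt : ∀ᵐ x ∂(volume.restrict B),
        ENNReal.ofReal (k / 8) * ENNReal.ofReal ((∫ y in Set.Ioo a b, v (x, y)) ^ 2)
          ≤ ENNReal.ofReal Mr * ∫⁻ y in Set.Ioo a b, ENNReal.ofReal |φ (x, y) * v' (x, y)| := by
      filter_upwards [key] with x hx
      have heq : (∫ y in Set.Ioo a b, v (x, y)) = ∫ y in Set.Ioo a b, v' (x, y) :=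
        integral_congr_ae (hx.mono fun y hy => hy.2)
      rw [heq]
      exact oneDim hk hMr (fun y => v' (x, y)) (fun y => φ (x, y))
        (hv'm.comp measurable_prodMk_left) (hφmeas.comp measurable_prodMk_left)
        (hx.mono fun y hy => hy.1.2) (hx.mono fun y hy => hy.1.1)
    calc ENNReal.ofReal (k / 8)
          * ∫⁻ x in B, ENNReal.ofReal ((∫ y in Set.Ioo a b, v (x, y)) ^ 2) ∂volume
        = ∫⁻ x in B, ENNReal.ofReal (k / 8)
            * ENNReal.ofReal ((∫ y in Set.Ioo a b, v (x, y)) ^ 2) ∂volume :=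
          (lintegral_const_mul' _ _ ENNReal.ofReal_ne_top).symm
      _ ≤ ∫⁻ x in B, ENNReal.ofReal Mr
            * ∫⁻ y in Set.Ioo a b, ENNReal.ofReal |φ (x, y) * v' (x, y)| ∂volume ∂volume :=
          lintegral_mono_ae hpt
      _ = ENNReal.ofReal Mr * ∫⁻ x in B,
            ∫⁻ y in Set.Ioo a b, ENNReal.ofReal |φ (x, y) * v' (x, y)| ∂volume ∂volume :=
          lintegral_const_mul' _ _ ENNReal.ofReal_ne_top
      _ = M * ∫⁻ x in B,
            ∫⁻ y in Set.Ioo a b, ENNReal.ofReal |φ (x, y) * v' (x, y)| ∂volume ∂volume := by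
          rw [hMrdef, ENNReal.ofReal_toReal hMtop]
end

section
/- Let Ω ⊂ ℝ^d be a Borel set with λ^d(Ω) < ∞, let φ : Ω → ℝ be measurable, and let C > 0 be such that λ^d({x ∈ Ω : |φ(x)| ≤ ε}) ≤ C·ε for all ε > 0. Then for every v ∈ L^∞(Ω): ‖v‖_{L^∞(Ω)} · ∫_Ω |φ v| dλ^d ≥ (1/(4C)) · ‖v‖_{L¹(Ω)}². -/
open MeasureTheory Set
open scoped ENNReal

/-- If the measure of the sublevel sets `{|φ| ≤ ε}` in `Ω` grows at
most linearly, `λ^d({x ∈ Ω : |φ x| ≤ ε}) ≤ Cε`, then for every `v ∈ L^∞(Ω)`,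
`‖v‖_{L^∞(Ω)} ∫_Ω |φ v| dλ^d ≥ (1/(4C)) ‖v‖_{L¹(Ω)}²`. -/
theorem stmt8 (d : ℕ) (Ω : Set (EuclideanSpace ℝ (Fin d))) (hΩ : MeasurableSet Ω)
    (hΩfin : volume Ω < ⊤)
    (φ : EuclideanSpace ℝ (Fin d) → ℝ) (hφmeas : Measurable φ)
    (C : ℝ) (hC : 0 < C)
    (hlevel : ∀ ε : ℝ, 0 < ε →
      volume {x | x ∈ Ω ∧ |φ x| ≤ ε} ≤ ENNReal.ofReal (C * ε))
    (v : EuclideanSpace ℝ (Fin d) → ℝ) (hv : MemLp v ⊤ (volume.restrict Ω)) :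
    ENNReal.ofReal (1 / (4 * C)) * (eLpNorm v 1 (volume.restrict Ω)) ^ 2
      ≤ eLpNorm v ⊤ (volume.restrict Ω)
        * ∫⁻ x in Ω, ENNReal.ofReal |φ x * v x| := by
  set μ := volume.restrict Ω with hμdef
  set M := eLpNorm v ⊤ μ with hMdef
  set N := eLpNorm v 1 μ with hNdef
  have hMfin : M ≠ ⊤ := hv.2.ne
  have hvae : ∀ᵐ x ∂μ, (‖v x‖₊ : ℝ≥0∞) ≤ M := by
    simpa [hMdef, eLpNorm_exponent_top, enorm_eq_nnnorm] using ae_le_eLpNormEssSup (f := v) (μ := μ)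
  have hN1 : N = ∫⁻ x, (‖v x‖₊ : ℝ≥0∞) ∂μ := eLpNorm_one_eq_lintegral_enorm
  have hμfin : μ Set.univ ≠ ⊤ := by
    simpa [hμdef, Measure.restrict_apply_univ] using hΩfin.ne
  have hNle : N ≤ M * μ Set.univ := by
    rw [hN1, ← lintegral_const]
    exact lintegral_mono_ae hvae
  have hNfin : N ≠ ⊤ := ne_top_of_le_ne_top (ENNReal.mul_ne_top hMfin hμfin) hNle
  by_cases hN0 : N = 0
  · simp [hN0]
  have hM0 : M ≠ 0 := by
    intro h
    apply hN0
    have hz : v =ᵐ[μ] 0 := by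
      simpa [hMdef, eLpNorm_exponent_top, eLpNormEssSup_eq_zero_iff] using h
    rw [hNdef, eLpNorm_congr_ae hz, eLpNorm_zero]
  -- real versions
  set Mr := M.toReal with hMrdef
  set Nr := N.toReal with hNrdef
  have hMr : 0 < Mr := ENNReal.toReal_pos hM0 hMfin
  have hNr : 0 < Nr := ENNReal.toReal_pos hN0 hNfin
  have hMeq : M = ENNReal.ofReal Mr := (ENNReal.ofReal_toReal hMfin).symm
  have hNeq : N = ENNReal.ofReal Nr := (ENNReal.ofReal_toReal hNfin).symm
  set ε := Nr / (2 * C * Mr) with hεdef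
  have hε : 0 < ε := div_pos hNr (by positivity)
  set T := {x | x ∈ Ω ∧ |φ x| ≤ ε} with hTdef
  have hTsub : T ⊆ Ω := fun x hx => hx.1
  have hTmeas : MeasurableSet T :=
    hΩ.inter (measurableSet_le hφmeas.abs measurable_const)
  set S := Ω \ T with hSdef
  have hSmeas : MeasurableSet S := hΩ.diff hTmeas
  -- split the integral of ‖v‖ over Ω
  have h_split : N = (∫⁻ x in T, (‖v x‖₊ : ℝ≥0∞)) + ∫⁻ x in S, (‖v x‖₊ : ℝ≥0∞) := by
    rw [hN1, hμdef, ← lintegral_union hSmeas disjoint_sdiff_self_right,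
      Set.union_diff_cancel hTsub]
  -- bound on T
  have hT_bound : (∫⁻ x in T, (‖v x‖₊ : ℝ≥0∞)) ≤ N / 2 := by
    have hvaeT : ∀ᵐ x ∂(volume.restrict T), (‖v x‖₊ : ℝ≥0∞) ≤ M :=
      hvae.filter_mono (ae_mono (Measure.restrict_mono hTsub le_rfl))
    calc (∫⁻ x in T, (‖v x‖₊ : ℝ≥0∞)) ≤ ∫⁻ _ in T, M := lintegral_mono_ae hvaeT
      _ = M * volume T := by rw [lintegral_const, Measure.restrict_apply_univ]
      _ ≤ M * ENNReal.ofReal (C * ε) := by gcongr; exact hlevel ε hε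
      _ = N / 2 := by
          rw [hMeq, hNeq, ← ENNReal.ofReal_mul hMr.le,
            show (2 : ℝ≥0∞) = ENNReal.ofReal 2 by simp,
            ← ENNReal.ofReal_div_of_pos two_pos]
          congr 1
          field_simp [hεdef]
          rw [hεdef]; field_simp
  have hS_half : N / 2 ≤ ∫⁻ x in S, (‖v x‖₊ : ℝ≥0∞) := by
    have h1 : N / 2 + N / 2 ≤ N / 2 + ∫⁻ x in S, (‖v x‖₊ : ℝ≥0∞) := by
      rw [ENNReal.add_halves]
      calc N = (∫⁻ x in T, (‖v x‖₊ : ℝ≥0∞)) + ∫⁻ x in S, (‖v x‖₊ : ℝ≥0∞) := h_split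
        _ ≤ N / 2 + ∫⁻ x in S, (‖v x‖₊ : ℝ≥0∞) := by gcongr
    exact (ENNReal.add_le_add_iff_left (by simp [ENNReal.div_eq_top, hNfin])).mp h1
  -- lower bound of the integrand on S
  have hS_bound : ENNReal.ofReal ε * ∫⁻ x in S, (‖v x‖₊ : ℝ≥0∞)
      ≤ ∫⁻ x in S, ENNReal.ofReal |φ x * v x| := by
    rw [← lintegral_const_mul' _ _ ENNReal.ofReal_ne_top]
    refine lintegral_mono_ae ?_
    filter_upwards [ae_restrict_mem hSmeas] with x hx
    have hφx : ε ≤ |φ x| := by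
      by_contra h
      exact hx.2 ⟨hx.1, le_of_not_ge h⟩
    have : (‖v x‖₊ : ℝ≥0∞) = ENNReal.ofReal |v x| := by
      rw [← enorm_eq_nnnorm, ← ofReal_norm_eq_enorm, Real.norm_eq_abs]
    rw [this, ← ENNReal.ofReal_mul hε.le, abs_mul]
    exact ENNReal.ofReal_le_ofReal (by nlinarith [abs_nonneg (v x), abs_nonneg (φ x)])
  -- key algebraic identity
  have key : ENNReal.ofReal (1 / (4 * C)) * N ^ 2
      = M * (ENNReal.ofReal ε * (N / 2)) := by
    rw [hMeq, hNeq, show (2 : ℝ≥0∞) = ENNReal.ofReal 2 by simp,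
      ← ENNReal.ofReal_div_of_pos two_pos, sq,
      ← ENNReal.ofReal_mul hNr.le, ← ENNReal.ofReal_mul (by positivity),
      ← ENNReal.ofReal_mul hε.le, ← ENNReal.ofReal_mul hMr.le]
    congr 1
    field_simp [hεdef]
    rw [hεdef]; field_simp; norm_num
  calc ENNReal.ofReal (1 / (4 * C)) * N ^ 2
      = M * (ENNReal.ofReal ε * (N / 2)) := key
    _ ≤ M * (ENNReal.ofReal ε * ∫⁻ x in S, (‖v x‖₊ : ℝ≥0∞)) := by gcongr
    _ ≤ M * ∫⁻ x in S, ENNReal.ofReal |φ x * v x| := by gcongr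
    _ ≤ M * ∫⁻ x in Ω, ENNReal.ofReal |φ x * v x| := by
        gcongr
        exact Set.diff_subset
end

section
/- Let Ω ⊂ ℝ^d be open and bounded and let φ̄ ∈ C¹(ℝ^d) satisfy the structural assumption ∇φ̄(x) ≠ 0 for every x ∈ {φ̄ = 0} ∩ cl(Ω). Then there exists C > 0 such that λ^d({x ∈ cl(Ω) : |φ̄(x)| ≤ ε}) ≤ C·ε for all ε > 0. -/
open MeasureTheory Set

open Metric Pointwise in
/-- Translation trick: if every line in direction `e` meets `S` in a set of diameter `≤ L`,
and `S` lies in a ball of radius `R ≥ L`, then `vol S ≤ (2L/R) · vol(ball 3R)`. -/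
lemma stmt9_translate_bound (d : ℕ) (S : Set (EuclideanSpace ℝ (Fin d))) (hS : MeasurableSet S)
    (R L : ℝ) (hR : 0 < R) (hL : 0 < L) (hLR : L ≤ R)
    (hSR : S ⊆ ball (0 : EuclideanSpace ℝ (Fin d)) R)
    (e : EuclideanSpace ℝ (Fin d)) (he : ‖e‖ ≤ 1)
    (hslice : ∀ p ∈ S, ∀ q ∈ S, ∀ t : ℝ, q = p + t • e → |t| ≤ L) :
    volume S ≤ ENNReal.ofReal
      (2 * L / R * (volume (ball (0 : EuclideanSpace ℝ (Fin d)) (3 * R))).toReal) := by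
  classical
  set N : ℕ := ⌊R / L⌋₊ with hN
  have hRL1 : (1 : ℝ) ≤ R / L := (one_le_div hL).2 hLR
  have hN1 : 1 ≤ N := Nat.le_floor (by exact_mod_cast hRL1)
  have hNle : (N : ℝ) ≤ R / L := Nat.floor_le (by positivity)
  have hNL : (N : ℝ) * L ≤ R := by
    rw [← le_div_iff₀ hL]; exact hNle
  have hNhalf : R / (2 * L) ≤ (N : ℝ) := by
    have h2 : R / L - 1 < (N : ℝ) := Nat.sub_one_lt_floor _
    have hN1' : (1 : ℝ) ≤ (N : ℝ) := by exact_mod_cast hN1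
    rcases le_or_gt (R / L) 2 with h | h
    · calc R / (2 * L) = (R / L) / 2 := by ring
        _ ≤ 1 := by linarith
        _ ≤ (N : ℝ) := hN1'
    · calc R / (2 * L) = (R / L) / 2 := by ring
        _ ≤ R / L - 1 := by linarith
        _ ≤ (N : ℝ) := h2.le
  set T : ℕ → Set (EuclideanSpace ℝ (Fin d)) := fun k => ((k : ℝ) * (2 * L)) • e +ᵥ S with hT
  have hTm : ∀ k, MeasurableSet (T k) := fun k => hS.const_vadd _
  have hTvol : ∀ k, volume (T k) = volume S := fun k => MeasureTheory.measure_vadd _ _ _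
  -- disjointness
  have hdisj : (↑(Finset.range N) : Set ℕ).PairwiseDisjoint T := by
    intro i _ j _ hij
    refine Set.disjoint_left.2 fun x hxi hxj => hij ?_
    obtain ⟨p, hp, hpe⟩ := hxi
    obtain ⟨q, hq, hqe⟩ := hxj
    have hqp : q = p + (((i : ℝ) - (j : ℝ)) * (2 * L)) • e := by
      simp only [vadd_eq_add] at hpe hqe
      have : ((i : ℝ) * (2 * L)) • e + p = ((j : ℝ) * (2 * L)) • e + q :=
        hpe.trans hqe.symm
      have h2 : q = ((i : ℝ) * (2 * L)) • e + p - ((j : ℝ) * (2 * L)) • e := by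
        rw [this]; abel
      rw [h2, sub_mul]; module
    have := hslice p hp q hq _ hqp
    by_contra hne
    have hij1 : (1 : ℝ) ≤ |(i : ℝ) - (j : ℝ)| := by
      have : i ≠ j := hne
      have h3 : (i : ℤ) ≠ (j : ℤ) := by exact_mod_cast this
      have h4 : (1 : ℤ) ≤ |(i : ℤ) - (j : ℤ)| := Int.one_le_abs (sub_ne_zero.2 h3)
      have : ((1 : ℤ) : ℝ) ≤ |((i : ℤ) : ℝ) - ((j : ℤ) : ℝ)| := by
        rw [← Int.cast_sub, ← Int.cast_abs]; exact_mod_cast h4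
      simpa using this
    have habs : |((i : ℝ) - (j : ℝ)) * (2 * L)| = |(i : ℝ) - (j : ℝ)| * (2 * L) := by
      rw [abs_mul, abs_of_pos (by positivity : (0:ℝ) < 2 * L)]
    nlinarith [this, abs_nonneg ((i : ℝ) - (j : ℝ))]
  -- containment in big ball
  have hTsub : ∀ k ∈ Finset.range N, T k ⊆ ball (0 : EuclideanSpace ℝ (Fin d)) (3 * R) := by
    intro k hk x hx
    obtain ⟨p, hp, hpe⟩ := hx
    have hkN : (k : ℝ) ≤ (N : ℝ) := by
      exact_mod_cast (Finset.mem_range.1 hk).le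
    have hpb : ‖p‖ < R := by simpa using hSR hp
    have : ‖x‖ ≤ (k : ℝ) * (2 * L) * ‖e‖ + ‖p‖ := by
      rw [← hpe]
      calc ‖((k : ℝ) * (2 * L)) • e + p‖ ≤ ‖((k : ℝ) * (2 * L)) • e‖ + ‖p‖ := norm_add_le _ _
        _ = |(k : ℝ) * (2 * L)| * ‖e‖ + ‖p‖ := by rw [norm_smul, Real.norm_eq_abs]
        _ = (k : ℝ) * (2 * L) * ‖e‖ + ‖p‖ := by
            rw [abs_of_nonneg (by positivity)]
    have hnorm : ‖x‖ < 3 * R := by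
      have h1 : (k : ℝ) * (2 * L) * ‖e‖ ≤ (k : ℝ) * (2 * L) := by
        have := mul_le_mul_of_nonneg_left he
          (by positivity : (0:ℝ) ≤ (k : ℝ) * (2 * L))
        linarith
      nlinarith
    simpa using hnorm
  -- sum up
  have hsum : (N : ENNReal) * volume S ≤ volume (ball (0 : EuclideanSpace ℝ (Fin d)) (3 * R)) := by
    have h1 : ∑ k ∈ Finset.range N, volume (T k) = volume (⋃ k ∈ Finset.range N, T k) :=
      (measure_biUnion_finset hdisj fun k _ => hTm k).symm
    have h2 : volume (⋃ k ∈ Finset.range N, T k) ≤ volume (ball (0 : EuclideanSpace ℝ (Fin d)) (3 * R)) :=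
      measure_mono (Set.iUnion₂_subset hTsub)
    calc (N : ENNReal) * volume S = ∑ k ∈ Finset.range N, volume (T k) := by
          simp [hTvol, Finset.sum_const, mul_comm]
      _ ≤ volume (ball (0 : EuclideanSpace ℝ (Fin d)) (3 * R)) := h1 ▸ h2
  have hVne : volume (ball (0 : EuclideanSpace ℝ (Fin d)) (3 * R)) ≠ ⊤ := measure_ball_lt_top.ne
  set V : ℝ := (volume (ball (0 : EuclideanSpace ℝ (Fin d)) (3 * R))).toReal with hV
  have hV0 : 0 ≤ V := ENNReal.toReal_nonneg
  have hVeq : volume (ball (0 : EuclideanSpace ℝ (Fin d)) (3 * R)) = ENNReal.ofReal V := by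
    rw [hV, ENNReal.ofReal_toReal hVne]
  have hN0 : (0 : ℝ) < (N : ℝ) := by exact_mod_cast hN1
  -- volume S ≤ V / N ≤ (2L/R) V
  have hfin : (N : ENNReal) * volume S ≤ ENNReal.ofReal ((N : ℝ) * (2 * L / R * V)) := by
    refine hsum.trans ?_
    rw [hVeq]
    refine ENNReal.ofReal_le_ofReal ?_
    have hnn : 0 ≤ 2 * L / R * V := by positivity
    calc V = R / (2 * L) * (2 * L / R * V) := by field_simp
      _ ≤ (N : ℝ) * (2 * L / R * V) := mul_le_mul_of_nonneg_right hNhalf hnn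
  have this' := hfin
  rw [ENNReal.ofReal_mul (le_of_lt hN0), ← ENNReal.ofReal_natCast] at this'
  -- cancel N
  have hNne : (ENNReal.ofReal (N : ℝ)) ≠ 0 := by
    rw [ne_eq, ENNReal.ofReal_eq_zero, not_le]
    exact hN0
  have hNnetop : (ENNReal.ofReal (N : ℝ)) ≠ ⊤ := ENNReal.ofReal_ne_top
  calc volume S = (ENNReal.ofReal (N : ℝ))⁻¹ * ((ENNReal.ofReal (N : ℝ)) * volume S) := by
        rw [← mul_assoc, ENNReal.inv_mul_cancel hNne hNnetop, one_mul]
    _ ≤ (ENNReal.ofReal (N : ℝ))⁻¹ * (ENNReal.ofReal (N : ℝ) * ENNReal.ofReal (2 * L / R * V)) :=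
        mul_le_mul_right this' _
    _ = ENNReal.ofReal (2 * L / R * V) := by
        rw [← mul_assoc, ENNReal.inv_mul_cancel hNne hNnetop, one_mul]

open Metric in
/-- Growth along a line where the directional derivative is bounded below. -/
lemma stmt9_line_growth (d : ℕ) (φ : EuclideanSpace ℝ (Fin d) → ℝ) (hφ : ContDiff ℝ 1 φ)
    (x₀ : EuclideanSpace ℝ (Fin d)) (r c : ℝ) (e : EuclideanSpace ℝ (Fin d))
    (hc : ∀ y ∈ ball x₀ r, c ≤ fderiv ℝ φ y e)
    (p : EuclideanSpace ℝ (Fin d)) (hp : p ∈ ball x₀ r) (t : ℝ) (ht : 0 ≤ t)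
    (hq : p + t • e ∈ ball x₀ r) :
    φ p + c * t ≤ φ (p + t • e) := by
  rcases eq_or_lt_of_le ht with h | ht
  · simp [← h]
  have hseg : ∀ s ∈ Icc (0 : ℝ) t, p + s • e ∈ ball x₀ r := by
    intro s hs
    have hst : s / t ∈ Icc (0 : ℝ) 1 :=
      ⟨div_nonneg hs.1 ht.le, (div_le_one ht).2 hs.2⟩
    have := (convex_ball x₀ r).add_smul_sub_mem hp hq ⟨hst.1, hst.2⟩
    have heq : p + (s / t) • (p + t • e - p) = p + s • e := by
      rw [add_sub_cancel_left, smul_smul, div_mul_cancel₀ _ ht.ne']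
    rwa [heq] at this
  set g : ℝ → ℝ := fun s => φ (p + s • e) - c * s with hg
  have hderiv : ∀ s : ℝ, HasDerivAt g (fderiv ℝ φ (p + s • e) e - c) s := by
    intro s
    have h1 : HasDerivAt (fun u : ℝ => p + u • e) e s := by
      simpa using ((hasDerivAt_id s).smul_const e).const_add p
    have h2 : HasDerivAt (fun u : ℝ => φ (p + u • e)) (fderiv ℝ φ (p + s • e) e) s :=
      (hφ.differentiable one_ne_zero _).hasFDerivAt.comp_hasDerivAt s h1
    have h3 := h2.sub ((hasDerivAt_id s).const_mul c)
    simp only [id, mul_one] at h3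
    exact h3
  have hmono : MonotoneOn g (Icc 0 t) := by
    refine monotoneOn_of_deriv_nonneg (convex_Icc 0 t)
      (fun s _ => ((hderiv s).continuousAt).continuousWithinAt)
      (fun s _ => ((hderiv s).differentiableAt).differentiableWithinAt) ?_
    intro s hs
    rw [interior_Icc] at hs
    rw [(hderiv s).deriv]
    have := hc _ (hseg s ⟨hs.1.le, hs.2.le⟩)
    linarith
  have := hmono (left_mem_Icc.2 ht.le) (right_mem_Icc.2 ht.le) ht.le
  simp only [hg, zero_smul, add_zero, mul_zero, sub_zero] at this
  linarith

set_option maxHeartbeats 1000000 in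
/-- If `Ω ⊂ ℝ^d` is open and bounded and `φ̄ ∈ C¹(ℝ^d)` satisfies
`∇φ̄ ≠ 0` on `{φ̄ = 0} ∩ cl(Ω)`, then there exists `C > 0` with
`λ^d({x ∈ cl(Ω) : |φ̄(x)| ≤ ε}) ≤ Cε` for all `ε > 0`. -/
theorem stmt9 (d : ℕ) (Ω : Set (EuclideanSpace ℝ (Fin d)))
    (hΩo : IsOpen Ω) (hΩb : Bornology.IsBounded Ω)
    (φ : EuclideanSpace ℝ (Fin d) → ℝ) (hφ : ContDiff ℝ 1 φ)
    (hstruct : ∀ x ∈ closure Ω, φ x = 0 → fderiv ℝ φ x ≠ 0) :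
    ∃ C : ℝ, 0 < C ∧ ∀ ε : ℝ, 0 < ε →
      volume {x | x ∈ closure Ω ∧ |φ x| ≤ ε} ≤ ENNReal.ofReal (C * ε) := by
  classical
  set K := closure Ω with hKdef
  have hKc : IsCompact K := hΩb.isCompact_closure
  have hKcl : IsClosed K := isClosed_closure
  -- trivial case: K empty
  by_cases hKne : K = ∅
  · refine ⟨1, one_pos, fun ε hε => ?_⟩
    have : {x | x ∈ K ∧ |φ x| ≤ ε} = ∅ := by
      rw [hKne]; simp
    rw [this]
    simp [measure_empty]
  obtain ⟨R, hR0, hKR⟩ : ∃ R, 0 < R ∧ K ⊆ Metric.ball 0 R := by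
    obtain ⟨R, hR, hsub⟩ := hKc.isBounded.subset_ball_lt 0 0
    exact ⟨R, hR, hsub⟩
  -- local estimate at each point of K
  have hloc : ∀ x ∈ K, ∃ U : Set (EuclideanSpace ℝ (Fin d)), IsOpen U ∧ x ∈ U ∧ ∃ ε₁ > (0:ℝ), ∃ B ≥ (0:ℝ),
      ∀ ε : ℝ, 0 < ε → ε ≤ ε₁ →
        volume (K ∩ U ∩ {y | |φ y| ≤ ε}) ≤ ENNReal.ofReal (B * ε) := by
    intro x hx
    by_cases hφx : φ x = 0
    · -- nondegenerate zero point
      have hf : fderiv ℝ φ x ≠ 0 := hstruct x hx hφx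
      obtain ⟨v, hv⟩ : ∃ v, fderiv ℝ φ x v ≠ 0 := by
        by_contra h
        push_neg at h
        exact hf (by ext w; simpa using h w)
      set w : EuclideanSpace ℝ (Fin d) := (fderiv ℝ φ x v)⁻¹ • v with hw
      have hfw : fderiv ℝ φ x w = 1 := by
        rw [hw, (fderiv ℝ φ x).map_smul]
        field_simp
        simp [hv]
      have hwne : w ≠ 0 := by
        intro h
        rw [h] at hfw
        simp at hfw
      set e : EuclideanSpace ℝ (Fin d) := ‖w‖⁻¹ • w with he
      have hne : ‖e‖ = 1 := by
        rw [he, norm_smul, norm_inv, norm_norm, inv_mul_cancel₀ (norm_ne_zero_iff.2 hwne)]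
      set c : ℝ := fderiv ℝ φ x e with hc
      have hc0 : 0 < c := by
        rw [hc, he, (fderiv ℝ φ x).map_smul, hfw]
        simp only [smul_eq_mul, mul_one]
        exact inv_pos.2 (norm_pos_iff.2 hwne)
      -- continuity of directional derivative
      have hcont : Continuous fun y => fderiv ℝ φ y e :=
        ((ContinuousLinearMap.apply ℝ ℝ e).continuous).comp (hφ.continuous_fderiv one_ne_zero)
      have hU'o : IsOpen {y : EuclideanSpace ℝ (Fin d) | c / 2 < fderiv ℝ φ y e} := isOpen_lt continuous_const hcont
      have hxU' : x ∈ {y : EuclideanSpace ℝ (Fin d) | c / 2 < fderiv ℝ φ y e} := by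
        simp only [mem_setOf_eq, ← hc]
        linarith
      obtain ⟨r, hr0, hrsub⟩ := Metric.isOpen_iff.1 hU'o x hxU'
      refine ⟨Metric.ball x r, Metric.isOpen_ball, Metric.mem_ball_self hr0,
        c * R / 16, div_pos (mul_pos hc0 hR0) (by norm_num),
        16 / (c * R) * (volume (Metric.ball (0 : EuclideanSpace ℝ (Fin d)) (3 * R))).toReal + 1,
        add_nonneg (mul_nonneg (le_of_lt (div_pos (by norm_num) (mul_pos hc0 hR0)))
          ENNReal.toReal_nonneg) one_pos.le, ?_⟩
      intro ε hε hε₁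
      set L : ℝ := 8 * ε / c with hL
      have hL0 : 0 < L := by positivity
      have hLR : L ≤ R := by
        rw [hL, div_le_iff₀ hc0]
        nlinarith
      set S := K ∩ Metric.ball x r ∩ {y | |φ y| ≤ ε} with hS
      have hSm : MeasurableSet S := by
        refine (hKcl.measurableSet.inter Metric.isOpen_ball.measurableSet).inter ?_
        exact (isClosed_le (continuous_abs.comp hφ.continuous) continuous_const).measurableSet
      have hSR : S ⊆ Metric.ball (0 : EuclideanSpace ℝ (Fin d)) R := fun y hy => hKR hy.1.1
      have hslice : ∀ p ∈ S, ∀ q ∈ S, ∀ t : ℝ, q = p + t • e → |t| ≤ L := by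
        intro p hp q hq t hpq
        have hderb : ∀ y ∈ Metric.ball x r, c / 2 ≤ fderiv ℝ φ y e :=
          fun y hy => (hrsub hy).le
        have hpb : p ∈ Metric.ball x r := hp.1.2
        have hqb : q ∈ Metric.ball x r := hq.1.2
        have hpφ : |φ p| ≤ ε := hp.2
        have hqφ : |φ q| ≤ ε := hq.2
        rcases le_or_gt 0 t with ht | ht
        · have := stmt9_line_growth d φ hφ x r (c / 2) e hderb p hpb t ht (hpq ▸ hqb)
          rw [← hpq] at this
          rw [abs_of_nonneg ht, hL]
          rw [le_div_iff₀ hc0]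
          have h1 : φ q ≤ ε := le_of_abs_le hqφ
          have h2 : -ε ≤ φ p := neg_le_of_abs_le hpφ
          nlinarith
        · have hqp : p = q + (-t) • e := by
            rw [hpq]; module
          have := stmt9_line_growth d φ hφ x r (c / 2) e hderb q hqb (-t) (by linarith)
            (hqp ▸ hpb)
          rw [← hqp] at this
          rw [abs_of_neg ht, hL, le_div_iff₀ hc0]
          have h1 : φ p ≤ ε := le_of_abs_le hpφ
          have h2 : -ε ≤ φ q := neg_le_of_abs_le hqφ
          nlinarith
      have hmain := stmt9_translate_bound d S hSm R L hR0 hL0 hLR hSR e hne.le hslice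
      refine hmain.trans (ENNReal.ofReal_le_ofReal ?_)
      set V : ℝ := (volume (Metric.ball (0 : EuclideanSpace ℝ (Fin d)) (3 * R))).toReal with hVd
      have hV0 : (0:ℝ) ≤ V := ENNReal.toReal_nonneg
      have key : 2 * L / R * V = 16 / (c * R) * V * ε := by
        rw [hL]; field_simp; ring
      rw [key]
      nlinarith [hε.le, mul_nonneg (mul_nonneg hV0 hε.le) (le_of_lt hc0)]
    · -- φ x ≠ 0 : small neighbourhood avoids the sublevel set for small ε
      refine ⟨{y : EuclideanSpace ℝ (Fin d) | |φ x| / 2 < |φ y|}, isOpen_lt continuous_const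
        (continuous_abs.comp hφ.continuous), by
          simp only [mem_setOf_eq]
          have : 0 < |φ x| := abs_pos.2 hφx
          linarith,
        |φ x| / 2, by have := abs_pos.2 hφx; linarith, 0, le_refl 0, ?_⟩
      intro ε hε hε₁
      have hempty : K ∩ {y : EuclideanSpace ℝ (Fin d) | |φ x| / 2 < |φ y|} ∩ {y | |φ y| ≤ ε} = ∅ := by
        ext y
        simp only [mem_inter_iff, mem_setOf_eq, mem_empty_iff_false, iff_false, not_and]
        intro h1 h2
        linarith [h1.2]
      rw [hempty]
      simp
  -- compactness: extract a finite subcover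
  choose U hUo hxU ε₁ hε₁ B hB0 hB using hloc
  obtain ⟨F, hFsub⟩ := hKc.elim_nhds_subcover' (fun x hx => U x hx)
    (fun x hx => (hUo x hx).mem_nhds (hxU x hx))
  have hFne : F.Nonempty := by
    rcases Set.nonempty_iff_ne_empty.2 hKne with ⟨y, hy⟩
    rcases Set.mem_iUnion₂.1 (hFsub hy) with ⟨z, hz, _⟩
    exact ⟨z, hz⟩
  set ε₀ : ℝ := F.inf' hFne (fun z => ε₁ z z.2) with hε₀def
  have hε₀pos : 0 < ε₀ := by
    rw [hε₀def]
    exact (Finset.lt_inf'_iff hFne).2 fun z _ => hε₁ z z.2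
  set Btot : ℝ := ∑ z ∈ F, B z z.2 with hBtot
  have hBtot0 : 0 ≤ Btot := Finset.sum_nonneg fun z _ => hB0 z z.2
  have hKvol : volume K ≠ ⊤ := hKc.measure_lt_top.ne
  set M : ℝ := (volume K).toReal with hM
  have hM0 : 0 ≤ M := ENNReal.toReal_nonneg
  refine ⟨Btot + M / ε₀ + 1, by positivity, fun ε hε => ?_⟩
  rcases le_or_gt ε ε₀ with hle | hlt
  · -- small ε: use the local bounds
    have hsub : {x | x ∈ K ∧ |φ x| ≤ ε} ⊆
        ⋃ z ∈ F, (K ∩ U z z.2 ∩ {y | |φ y| ≤ ε}) := by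
      intro y hy
      rcases Set.mem_iUnion₂.1 (hFsub hy.1) with ⟨z, hz, hyz⟩
      exact Set.mem_iUnion₂.2 ⟨z, hz, ⟨hy.1, hyz⟩, hy.2⟩
    calc volume {x | x ∈ K ∧ |φ x| ≤ ε}
        ≤ volume (⋃ z ∈ F, (K ∩ U z z.2 ∩ {y | |φ y| ≤ ε})) := measure_mono hsub
      _ ≤ ∑ z ∈ F, volume (K ∩ U z z.2 ∩ {y | |φ y| ≤ ε}) := measure_biUnion_finset_le _ _
      _ ≤ ∑ z ∈ F, ENNReal.ofReal (B z z.2 * ε) := by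
          refine Finset.sum_le_sum fun z hz => ?_
          exact hB z z.2 ε hε (hle.trans (Finset.inf'_le _ hz))
      _ = ENNReal.ofReal (∑ z ∈ F, B z z.2 * ε) := by
          rw [ENNReal.ofReal_sum_of_nonneg]
          intro z _
          exact mul_nonneg (hB0 z z.2) hε.le
      _ ≤ ENNReal.ofReal ((Btot + M / ε₀ + 1) * ε) := by
          refine ENNReal.ofReal_le_ofReal ?_
          rw [← Finset.sum_mul]
          have h2 : (0:ℝ) ≤ M / ε₀ := div_nonneg hM0 hε₀pos.le
          nlinarith
  · -- large ε: crude volume bound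
    calc volume {x | x ∈ K ∧ |φ x| ≤ ε} ≤ volume K := measure_mono fun y hy => hy.1
      _ = ENNReal.ofReal M := (ENNReal.ofReal_toReal hKvol).symm
      _ ≤ ENNReal.ofReal ((Btot + M / ε₀ + 1) * ε) := by
          refine ENNReal.ofReal_le_ofReal ?_
          have h1 : M ≤ M / ε₀ * ε := by
            rw [div_mul_eq_mul_div, le_div_iff₀ hε₀pos]
            nlinarith
          nlinarith
end

section
/- Let Ω ⊂ ℝ^d be open and bounded and let φ̄ ∈ C¹(ℝ^d) satisfy the structural assumption ∇φ̄(x) ≠ 0 for every x ∈ {φ̄ = 0} ∩ cl(Ω). Then there exists c > 0 such that for all v ∈ L^∞(Ω): ‖v‖_{L^∞(Ω)} · ∫_Ω |φ̄ v| dλ^d ≥ c · ‖v‖_{L¹(Ω)}². -/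
open MeasureTheory Set Metric
open scoped ENNReal

lemma coord_dist_le {m : ℕ} (x y : EuclideanSpace ℝ (Fin m)) (k : Fin m) :
    dist (x k) (y k) ≤ dist x y := by
  rw [EuclideanSpace.dist_eq]
  rw [show dist (x k) (y k) = Real.sqrt ((dist (x k) (y k))^2) from
    (Real.sqrt_sq dist_nonneg).symm]
  apply Real.sqrt_le_sqrt
  exact Finset.single_le_sum (f := fun i => dist (x i) (y i) ^ 2)
    (fun i _ => sq_nonneg _) (Finset.mem_univ k)

lemma insertNth_line {n : ℕ} (i : Fin (n+1)) (t : ℝ) (y : Fin n → ℝ) :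
    Fin.insertNth (α := fun _ => ℝ) i t y
      = Fin.insertNth (α := fun _ => ℝ) i 0 y
        + t • (Pi.single i 1 : Fin (n+1) → ℝ) := by
  funext j
  rcases eq_or_ne j i with rfl | hj
  · simp
  · obtain ⟨k, rfl⟩ := Fin.exists_succAbove_eq hj
    have h := Fin.succAbove_ne i k
    simp [Fin.insertNth_apply_succAbove, Pi.single_eq_of_ne h]

lemma slab (n : ℕ) (x₀ : EuclideanSpace ℝ (Fin (n+1))) (R δ ε : ℝ)
    (hR : 0 < R) (hδ : 0 < δ) (hε : 0 < ε)
    (g : EuclideanSpace ℝ (Fin (n+1)) → ℝ) (hg : ContDiff ℝ 1 g)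
    (i : Fin (n+1))
    (hde : ∀ x ∈ closedBall x₀ R, δ ≤ fderiv ℝ g x (EuclideanSpace.single i 1)) :
    volume {x | x ∈ closedBall x₀ R ∧ |g x| < ε}
      ≤ ENNReal.ofReal ((4*ε/δ) * (2*R)^n) := by
  classical
  set e : EuclideanSpace ℝ (Fin (n+1)) := EuclideanSpace.single i 1 with he
  set T : EuclideanSpace ℝ (Fin (n+1)) ≃ᵐ ℝ × (Fin n → ℝ) :=
    (MeasurableEquiv.toLp 2 (Fin (n+1) → ℝ)).symm.trans
      (MeasurableEquiv.piFinSuccAbove (fun _ => ℝ) i) with hTdef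
  have hT : MeasurePreserving T volume
      ((volume : Measure ℝ).prod (volume : Measure (Fin n → ℝ))) :=
    (volume_preserving_piFinSuccAbove (fun _ => ℝ) i).comp
      (EuclideanSpace.volume_preserving_symm_measurableEquiv_toLp (Fin (n+1)))
  set S : Set (EuclideanSpace ℝ (Fin (n+1))) :=
    {x | x ∈ closedBall x₀ R ∧ |g x| < ε} with hSdef
  have hS : MeasurableSet S := by
    have : S = closedBall x₀ R ∩ g ⁻¹' (Ioo (-ε) ε) := by
      ext x; simp [hSdef, abs_lt, and_assoc]
    rw [this]
    exact measurableSet_closedBall.inter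
      (hg.continuous.measurable measurableSet_Ioo)
  have hline : ∀ (t : ℝ) (y : Fin n → ℝ),
      T.symm (t, y) = T.symm (0, y) + t • e := by
    intro t y
    ext j
    have := congrFun (insertNth_line i t y) j
    simpa [T, e, EuclideanSpace.single_apply, Pi.single_apply] using this
  -- derivative of g along the line
  have hk : ∀ (y : Fin n → ℝ) (t : ℝ),
      HasDerivAt (fun s => g (T.symm (s, y))) (fderiv ℝ g (T.symm (t, y)) e) t := by
    intro y t
    have hld : HasDerivAt (fun s : ℝ => T.symm (s, y)) e t := by
      have : (fun s : ℝ => T.symm (s, y)) = fun s => T.symm (0, y) + s • e := by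
        funext s; exact hline s y
      rw [this]
      simpa using ((hasDerivAt_id t).smul_const e).const_add (T.symm (0, y))
    exact ((hg.differentiable one_ne_zero _).hasFDerivAt).comp_hasDerivAt t hld
  -- two point estimate
  have htwo : ∀ (y : Fin n → ℝ) (a b : ℝ), a < b →
      T.symm (a, y) ∈ closedBall x₀ R → T.symm (b, y) ∈ closedBall x₀ R →
      δ * (b - a) ≤ g (T.symm (b, y)) - g (T.symm (a, y)) := by
    intro y a b hab hma hmb
    have hcont : Continuous (fun s : ℝ => g (T.symm (s, y))) := by
      have : (fun s : ℝ => T.symm (s, y)) = fun s => T.symm (0, y) + s • e := by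
        funext s; exact hline s y
      exact hg.continuous.comp (by rw [this]; exact continuous_const.add (continuous_id.smul continuous_const))
    obtain ⟨c, hc, hceq⟩ := exists_hasDerivAt_eq_slope
      (fun s => g (T.symm (s, y))) (fun s => fderiv ℝ g (T.symm (s, y)) e) hab
      hcont.continuousOn (fun s _ => hk y s)
    have hmem : T.symm (c, y) ∈ closedBall x₀ R := by
      have hcIcc : c ∈ Icc a b := ⟨hc.1.le, hc.2.le⟩
      set θ : ℝ := (c - a) / (b - a) with hθ
      have hba : 0 < b - a := sub_pos.2 hab
      have hθ0 : 0 ≤ θ := div_nonneg (sub_nonneg.2 hcIcc.1) hba.le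
      have hθ1 : θ ≤ 1 := (div_le_one hba).2 (by linarith [hcIcc.2])
      have hcomb : T.symm (c, y) = (1 - θ) • T.symm (a, y) + θ • T.symm (b, y) := by
        rw [hline c y, hline a y, hline b y]
        have hcval : c = (1 - θ) * a + θ * b := by
          rw [hθ]; field_simp; ring
        rw [hcval]
        module
      rw [hcomb]
      exact convex_closedBall x₀ R hma hmb (by linarith) hθ0 (by ring)
    have hd : δ ≤ (g (T.symm (b, y)) - g (T.symm (a, y))) / (b - a) := by
      rw [← hceq]; exact hde _ hmem
    have hba : 0 < b - a := sub_pos.2 hab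
    calc δ * (b - a) ≤ ((g (T.symm (b, y)) - g (T.symm (a, y))) / (b - a)) * (b - a) := by
          exact mul_le_mul_of_nonneg_right hd hba.le
      _ = g (T.symm (b, y)) - g (T.symm (a, y)) := by field_simp
  -- measure computation
  have hA : MeasurableSet (T.symm ⁻¹' S) := T.symm.measurable hS
  have hvol : volume S = ((volume : Measure ℝ).prod (volume : Measure (Fin n → ℝ)))
      (T.symm ⁻¹' S) := by
    rw [← hT.measure_preimage hA.nullMeasurableSet]
    congr 1
    ext x
    simp
  set y₀ : Fin n → ℝ := fun j => x₀ (i.succAbove j) with hy₀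
  have hslice : ∀ y : Fin n → ℝ,
      volume {t : ℝ | T.symm (t, y) ∈ S}
        ≤ (closedBall y₀ R).indicator (fun _ => ENNReal.ofReal (4*ε/δ)) y := by
    intro y
    by_cases hne : {t : ℝ | T.symm (t, y) ∈ S}.Nonempty
    · obtain ⟨t0, ht0⟩ := hne
      have hyball : y ∈ closedBall y₀ R := by
        have hxball := ht0.1
        rw [mem_closedBall] at hxball ⊢
        rw [dist_pi_le_iff hR.le]
        intro j
        have hcoord : y j = (T.symm (t0, y) : EuclideanSpace ℝ (Fin (n+1))) (i.succAbove j) := by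
          show y j = Fin.insertNth (α := fun _ => ℝ) i t0 y (i.succAbove j)
          rw [Fin.insertNth_apply_succAbove]
        rw [hcoord]
        exact le_trans (coord_dist_le _ x₀ (i.succAbove j)) hxball
      have hkey : ∀ a b : ℝ, a < b → T.symm (a, y) ∈ S → T.symm (b, y) ∈ S →
          b - a < 2*ε/δ := by
        intro a b hab ha hb
        have h1 := htwo y a b hab ha.1 hb.1
        have h2 : g (T.symm (b, y)) - g (T.symm (a, y)) < 2*ε := by
          have := abs_lt.1 ha.2
          have := abs_lt.1 hb.2
          linarith
        have h3 : δ * (b - a) < 2*ε := lt_of_le_of_lt h1 h2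
        rw [lt_div_iff₀ hδ]
        linarith
      have hsub : {t : ℝ | T.symm (t, y) ∈ S} ⊆ Ioo (t0 - 2*ε/δ) (t0 + 2*ε/δ) := by
        intro t ht
        have hpos : 0 < 2*ε/δ := by positivity
        rcases lt_trichotomy t t0 with h | h | h
        · have := hkey t t0 h ht ht0
          constructor <;> linarith
        · subst h; constructor <;> linarith
        · have := hkey t0 t h ht0 ht
          constructor <;> linarith
      calc volume {t : ℝ | T.symm (t, y) ∈ S}
          ≤ volume (Ioo (t0 - 2*ε/δ) (t0 + 2*ε/δ)) := measure_mono hsub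
        _ = ENNReal.ofReal (t0 + 2*ε/δ - (t0 - 2*ε/δ)) := Real.volume_Ioo
        _ = ENNReal.ofReal (4*ε/δ) := by ring_nf
        _ = (closedBall y₀ R).indicator (fun _ => ENNReal.ofReal (4*ε/δ)) y := by
            rw [indicator_of_mem hyball]
    · rw [not_nonempty_iff_eq_empty] at hne
      rw [hne]
      simp
  calc volume S
      = ∫⁻ y, volume ((fun t => (t, y)) ⁻¹' (T.symm ⁻¹' S)) ∂(volume : Measure (Fin n → ℝ)) := by
        rw [hvol, Measure.prod_apply_symm hA]
    _ ≤ ∫⁻ y, (closedBall y₀ R).indicator (fun _ => ENNReal.ofReal (4*ε/δ)) y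
          ∂(volume : Measure (Fin n → ℝ)) := lintegral_mono (fun y => hslice y)
    _ = ENNReal.ofReal (4*ε/δ) * volume (closedBall y₀ R) := by
        rw [lintegral_indicator measurableSet_closedBall, setLIntegral_const]
    _ = ENNReal.ofReal (4*ε/δ) * ENNReal.ofReal ((2*R)^n) := by
        rw [Real.volume_pi_closedBall y₀ hR.le]
        simp
    _ = ENNReal.ofReal ((4*ε/δ) * (2*R)^n) := by
        rw [ENNReal.ofReal_mul (by positivity)]

lemma loc (d : ℕ) (φ : EuclideanSpace ℝ (Fin d) → ℝ) (hφ : ContDiff ℝ 1 φ)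
    (z : EuclideanSpace ℝ (Fin d)) (hz : fderiv ℝ φ z ≠ 0) :
    ∃ R : ℝ, 0 < R ∧ ∃ C : ℝ, 0 < C ∧ ∀ ε : ℝ, 0 < ε →
      volume {x | x ∈ ball z R ∧ |φ x| < ε} ≤ ENNReal.ofReal (C * ε) := by
  cases d with
  | zero =>
    exfalso
    apply hz
    ext x
    have hx0 : x = 0 := Subsingleton.elim x 0
    simp [hx0]
  | succ n =>
    have hex : ∃ i : Fin (n+1), fderiv ℝ φ z (EuclideanSpace.single i 1) ≠ 0 := by
      by_contra h
      push_neg at h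
      apply hz
      have h0 : (fderiv ℝ φ z : EuclideanSpace ℝ (Fin (n+1)) →ₗ[ℝ] ℝ) = 0 := by
        apply Module.Basis.ext (EuclideanSpace.basisFun (Fin (n+1)) ℝ).toBasis
        intro i
        rw [OrthonormalBasis.coe_toBasis, EuclideanSpace.basisFun_apply]
        simpa using h i
      exact ContinuousLinearMap.coe_injective
        (h0.trans (ContinuousLinearMap.coe_zero).symm)
    obtain ⟨i, hi⟩ := hex
    obtain ⟨g, hg1, hgabs, hga⟩ : ∃ g : EuclideanSpace ℝ (Fin (n+1)) → ℝ,
        ContDiff ℝ 1 g ∧ (∀ x, |g x| = |φ x|) ∧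
        0 < fderiv ℝ g z (EuclideanSpace.single i 1) := by
      rcases lt_or_gt_of_ne hi with hneg | hpos
      · refine ⟨fun x => -φ x, hφ.neg, fun x => abs_neg _, ?_⟩
        rw [fderiv_fun_neg]
        simpa using hneg
      · exact ⟨φ, hφ, fun _ => rfl, hpos⟩
    set δ : ℝ := fderiv ℝ g z (EuclideanSpace.single i 1) / 2 with hδdef
    have hδ : 0 < δ := by positivity
    have hc : Continuous fun x => fderiv ℝ g x (EuclideanSpace.single i 1) :=
      (hg1.continuous_fderiv one_ne_zero).clm_apply continuous_const
    have hUopen : IsOpen {x | δ < fderiv ℝ g x (EuclideanSpace.single i 1)} :=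
      isOpen_lt continuous_const hc
    have hzU : z ∈ {x | δ < fderiv ℝ g x (EuclideanSpace.single i 1)} := by
      simp only [mem_setOf_eq, hδdef]
      linarith
    obtain ⟨R', hR', hball⟩ := Metric.isOpen_iff.1 hUopen z hzU
    set R : ℝ := R' / 2 with hRdef
    have hR : 0 < R := by positivity
    have hde : ∀ x ∈ closedBall z R, δ ≤ fderiv ℝ g x (EuclideanSpace.single i 1) := by
      intro x hx
      have : x ∈ ball z R' := lt_of_le_of_lt (mem_closedBall.1 hx) (by linarith)
      exact (hball this).le
    refine ⟨R, hR, (4/δ) * (2*R)^n, by positivity, fun ε hε => ?_⟩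
    have hsub : {x | x ∈ ball z R ∧ |φ x| < ε} ⊆ {x | x ∈ closedBall z R ∧ |g x| < ε} := by
      intro x hx
      exact ⟨ball_subset_closedBall hx.1, by rw [hgabs]; exact hx.2⟩
    calc volume {x | x ∈ ball z R ∧ |φ x| < ε}
        ≤ volume {x | x ∈ closedBall z R ∧ |g x| < ε} := measure_mono hsub
      _ ≤ ENNReal.ofReal ((4*ε/δ) * (2*R)^n) := slab n z R δ ε hR hδ hε g hg1 i hde
      _ = ENNReal.ofReal ((4/δ) * (2*R)^n * ε) := by ring_nf

lemma measbound (d : ℕ) (Ω : Set (EuclideanSpace ℝ (Fin d)))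
    (hΩb : Bornology.IsBounded Ω)
    (φ : EuclideanSpace ℝ (Fin d) → ℝ) (hφ : ContDiff ℝ 1 φ)
    (hstruct : ∀ x ∈ closure Ω, φ x = 0 → fderiv ℝ φ x ≠ 0) :
    ∃ C : ℝ, 0 < C ∧ ∀ ε : ℝ, 0 < ε →
      volume {x | x ∈ Ω ∧ |φ x| < ε} ≤ ENNReal.ofReal (C * ε) := by
  classical
  have hK : IsCompact (closure Ω) := hΩb.isCompact_closure
  set Z : Set (EuclideanSpace ℝ (Fin d)) := closure Ω ∩ φ ⁻¹' {0} with hZdef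
  have hZc : IsCompact Z :=
    hK.inter_right (isClosed_singleton.preimage hφ.continuous)
  have hZd : ∀ z ∈ Z, fderiv ℝ φ z ≠ 0 := fun z hz => hstruct z hz.1 hz.2
  choose! R hR C hC hloc using fun z (hz : Z z) => loc d φ hφ z (hZd z hz)
  have hcover : Z ⊆ ⋃ z ∈ Z, ball z (R z) :=
    fun z hz => mem_biUnion hz (mem_ball_self (hR z hz))
  obtain ⟨t, htZ, htfin, htcov⟩ :=
    hZc.elim_finite_subcover_image (fun z _ => isOpen_ball) hcover
  set U : Set (EuclideanSpace ℝ (Fin d)) := ⋃ z ∈ t, ball z (R z) with hUdef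
  have hUopen : IsOpen U := isOpen_biUnion fun _ _ => isOpen_ball
  have hK' : IsCompact (closure Ω \ U) := hK.diff hUopen
  obtain ⟨ε₀, hε₀, hminφ⟩ : ∃ ε₀ : ℝ, 0 < ε₀ ∧ ∀ x ∈ closure Ω \ U, ε₀ ≤ |φ x| := by
    by_cases hne : (closure Ω \ U).Nonempty
    · obtain ⟨x₀, hx₀, hmin⟩ := hK'.exists_isMinOn hne
        ((continuous_abs.comp hφ.continuous).continuousOn)
      refine ⟨|φ x₀|, ?_, fun x hx => hmin hx⟩
      rw [abs_pos]
      intro hφ0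
      have hxZ : x₀ ∈ Z := ⟨hx₀.1, hφ0⟩
      exact hx₀.2 (htcov hxZ)
    · exact ⟨1, one_pos, fun x hx => absurd ⟨x, hx⟩ hne⟩
  have hVfin : volume Ω < ⊤ := hΩb.measure_lt_top
  set V : ℝ := (volume Ω).toReal with hVdef
  have hV : 0 ≤ V := ENNReal.toReal_nonneg
  set F : Finset (EuclideanSpace ℝ (Fin d)) := htfin.toFinset with hFdef
  have hFt : ∀ z ∈ F, z ∈ Z := fun z hz => htZ (htfin.mem_toFinset.1 hz)
  set Csum : ℝ := ∑ z ∈ F, C z with hCsumdef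
  have hCsum : 0 ≤ Csum :=
    Finset.sum_nonneg fun z hz => (hC z (hFt z hz)).le
  refine ⟨Csum + V / ε₀ + 1, by positivity, fun ε hε => ?_⟩
  by_cases hcase : ε ≤ ε₀
  · have hsub : {x | x ∈ Ω ∧ |φ x| < ε} ⊆
        ⋃ z ∈ F, {x | x ∈ ball z (R z) ∧ |φ x| < ε} := by
      intro x hx
      have hxcl : x ∈ closure Ω := subset_closure hx.1
      by_cases hxU : x ∈ U
      · obtain ⟨z, hzt, hzball⟩ := mem_iUnion₂.1 hxU
        exact mem_biUnion (htfin.mem_toFinset.2 hzt) ⟨hzball, hx.2⟩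
      · exfalso
        have := hminφ x ⟨hxcl, hxU⟩
        have h2 := hx.2
        linarith
    calc volume {x | x ∈ Ω ∧ |φ x| < ε}
        ≤ ∑ z ∈ F, volume {x | x ∈ ball z (R z) ∧ |φ x| < ε} :=
          le_trans (measure_mono hsub) (measure_biUnion_finset_le F _)
      _ ≤ ∑ z ∈ F, ENNReal.ofReal (C z * ε) :=
          Finset.sum_le_sum fun z hz => hloc z (hFt z hz) ε hε
      _ = ENNReal.ofReal (∑ z ∈ F, C z * ε) :=
          (ENNReal.ofReal_sum_of_nonneg fun z hz =>
            mul_nonneg (hC z (hFt z hz)).le hε.le).symm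
      _ = ENNReal.ofReal (Csum * ε) := by rw [Finset.sum_mul]
      _ ≤ ENNReal.ofReal ((Csum + V / ε₀ + 1) * ε) := by
          apply ENNReal.ofReal_le_ofReal
          have : 0 ≤ V / ε₀ := by positivity
          nlinarith
  · push_neg at hcase
    calc volume {x | x ∈ Ω ∧ |φ x| < ε}
        ≤ volume Ω := measure_mono fun x hx => hx.1
      _ = ENNReal.ofReal V := (ENNReal.ofReal_toReal hVfin.ne).symm
      _ ≤ ENNReal.ofReal ((Csum + V / ε₀ + 1) * ε) := by
          apply ENNReal.ofReal_le_ofReal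
          have h1 : V ≤ V / ε₀ * ε := by
            rw [div_mul_eq_mul_div, le_div_iff₀ hε₀]
            nlinarith
          nlinarith

/-- If `Ω ⊂ ℝ^d` is open and bounded and `φ̄ ∈ C¹(ℝ^d)` satisfies
`∇φ̄ ≠ 0` on `{φ̄ = 0} ∩ cl(Ω)`, then there exists `c > 0` such that for all
`v ∈ L^∞(Ω)`: `‖v‖_{L^∞(Ω)} ∫_Ω |φ̄ v| dλ^d ≥ c ‖v‖_{L¹(Ω)}²`. -/
theorem stmt10 (d : ℕ) (Ω : Set (EuclideanSpace ℝ (Fin d)))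
    (hΩo : IsOpen Ω) (hΩb : Bornology.IsBounded Ω)
    (φ : EuclideanSpace ℝ (Fin d) → ℝ) (hφ : ContDiff ℝ 1 φ)
    (hstruct : ∀ x ∈ closure Ω, φ x = 0 → fderiv ℝ φ x ≠ 0) :
    ∃ c : ℝ, 0 < c ∧ ∀ v : EuclideanSpace ℝ (Fin d) → ℝ,
      MemLp v ⊤ (volume.restrict Ω) →
      ENNReal.ofReal c * (eLpNorm v 1 (volume.restrict Ω)) ^ 2
        ≤ eLpNorm v ⊤ (volume.restrict Ω)
          * ∫⁻ x in Ω, ENNReal.ofReal |φ x * v x| := by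
  obtain ⟨C, hCpos, hmeas⟩ := measbound d Ω hΩb φ hφ hstruct
  refine ⟨1/(4*C), by positivity, fun v hv => ?_⟩
  set μ : Measure (EuclideanSpace ℝ (Fin d)) := volume.restrict Ω with hμdef
  set M : ℝ≥0∞ := eLpNorm v ⊤ μ with hMdef
  set N : ℝ≥0∞ := eLpNorm v 1 μ with hNdef
  set I : ℝ≥0∞ := ∫⁻ x in Ω, ENNReal.ofReal |φ x * v x| with hIdef
  have hVfin : volume Ω < ⊤ := hΩb.measure_lt_top
  have hMfin : M < ⊤ := hv.2
  have hMae : ∀ᵐ x ∂μ, (‖v x‖₊ : ℝ≥0∞) ≤ M := by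
    rw [hMdef, eLpNorm_exponent_top]
    exact ae_le_eLpNormEssSup
  have hNlint : N = ∫⁻ x, (‖v x‖₊ : ℝ≥0∞) ∂μ := by
    rw [hNdef, eLpNorm_one_eq_lintegral_enorm]; rfl
  have hNfin : N < ⊤ := by
    rw [hNlint]
    calc ∫⁻ x, (‖v x‖₊ : ℝ≥0∞) ∂μ ≤ ∫⁻ _, M ∂μ := lintegral_mono_ae hMae
      _ = M * μ univ := lintegral_const M
      _ ≤ M * volume Ω := by
          apply mul_le_mul_right
          rw [hμdef, Measure.restrict_apply_univ]
      _ < ⊤ := ENNReal.mul_lt_top hMfin hVfin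
  obtain ⟨B, hB⟩ := hΩb.isCompact_closure.exists_bound_of_continuousOn
    hφ.continuous.continuousOn
  set B' : ℝ := max B 0 with hB'def
  have hφB : ∀ x ∈ Ω, |φ x| ≤ B' := fun x hx =>
    le_max_of_le_left (hB x (subset_closure hx))
  have hIae : ∀ᵐ x ∂μ, ENNReal.ofReal |φ x * v x|
      ≤ ENNReal.ofReal B' * (‖v x‖₊ : ℝ≥0∞) := by
    filter_upwards [self_mem_ae_restrict hΩo.measurableSet] with x hx
    calc ENNReal.ofReal |φ x * v x| ≤ ENNReal.ofReal (B' * |v x|) := by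
          apply ENNReal.ofReal_le_ofReal
          rw [abs_mul]
          exact mul_le_mul_of_nonneg_right (hφB x hx) (abs_nonneg _)
      _ = ENNReal.ofReal B' * ENNReal.ofReal |v x| :=
          ENNReal.ofReal_mul (le_max_right B 0)
      _ = ENNReal.ofReal B' * (‖v x‖₊ : ℝ≥0∞) := by
          rw [← enorm_eq_nnnorm, Real.enorm_eq_ofReal_abs]
  have hIfin : I < ⊤ := by
    have h1 : I ≤ ENNReal.ofReal B' * ∫⁻ x, (‖v x‖₊ : ℝ≥0∞) ∂μ := by
      rw [← lintegral_const_mul' _ _ ENNReal.ofReal_ne_top]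
      exact lintegral_mono_ae hIae
    refine lt_of_le_of_lt h1 ?_
    rw [← hNlint]
    exact ENNReal.mul_lt_top ENNReal.ofReal_lt_top hNfin
  have hkey : ∀ ε : ℝ, 0 < ε →
      N ≤ M * ENNReal.ofReal (C * ε) + I / ENNReal.ofReal ε := by
    intro ε hε
    have hεne : ENNReal.ofReal ε ≠ 0 := (ENNReal.ofReal_pos.2 hε).ne'
    set A : Set (EuclideanSpace ℝ (Fin d)) := {x | |φ x| < ε} with hAdef
    have hAm : MeasurableSet A :=
      (continuous_abs.comp hφ.continuous).measurable measurableSet_Iio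
    have hsplit : N = (∫⁻ x in A, (‖v x‖₊ : ℝ≥0∞) ∂μ)
        + ∫⁻ x in Aᶜ, (‖v x‖₊ : ℝ≥0∞) ∂μ := by
      rw [hNlint, ← lintegral_add_compl _ hAm]
    have h1 : ∫⁻ x in A, (‖v x‖₊ : ℝ≥0∞) ∂μ ≤ M * ENNReal.ofReal (C * ε) := by
      calc ∫⁻ x in A, (‖v x‖₊ : ℝ≥0∞) ∂μ
          ≤ ∫⁻ _ in A, M ∂μ := lintegral_mono_ae (ae_restrict_of_ae hMae)
        _ = M * μ A := setLIntegral_const A M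
        _ ≤ M * ENNReal.ofReal (C * ε) := by
            apply mul_le_mul_right
            rw [hμdef, Measure.restrict_apply hAm]
            have hAΩ : A ∩ Ω = {x | x ∈ Ω ∧ |φ x| < ε} := by
              ext x; simp [hAdef, and_comm]
            rw [hAΩ]
            exact hmeas ε hε
    have h2 : ∫⁻ x in Aᶜ, (‖v x‖₊ : ℝ≥0∞) ∂μ ≤ I / ENNReal.ofReal ε := by
      have hptwise : ∀ᵐ x ∂(μ.restrict Aᶜ), (‖v x‖₊ : ℝ≥0∞)
          ≤ ENNReal.ofReal |φ x * v x| / ENNReal.ofReal ε := by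
        filter_upwards [ae_restrict_mem hAm.compl] with x hx
        have hφx : ε ≤ |φ x| := not_lt.1 hx
        rw [ENNReal.le_div_iff_mul_le (Or.inl hεne) (Or.inl ENNReal.ofReal_ne_top)]
        rw [← enorm_eq_nnnorm, Real.enorm_eq_ofReal_abs, ← ENNReal.ofReal_mul (abs_nonneg _)]
        apply ENNReal.ofReal_le_ofReal
        rw [abs_mul]
        calc |v x| * ε ≤ |v x| * |φ x| :=
              mul_le_mul_of_nonneg_left hφx (abs_nonneg _)
          _ = |φ x| * |v x| := mul_comm _ _
      calc ∫⁻ x in Aᶜ, (‖v x‖₊ : ℝ≥0∞) ∂μ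
          ≤ ∫⁻ x in Aᶜ, ENNReal.ofReal |φ x * v x| / ENNReal.ofReal ε ∂μ :=
            lintegral_mono_ae hptwise
        _ ≤ ∫⁻ x, ENNReal.ofReal |φ x * v x| / ENNReal.ofReal ε ∂μ :=
            setLIntegral_le_lintegral _ _
        _ = I / ENNReal.ofReal ε := by
            simp_rw [div_eq_mul_inv]
            rw [lintegral_mul_const' _ _ (ENNReal.inv_ne_top.2 hεne)]
    rw [hsplit]
    exact add_le_add h1 h2
  set N' : ℝ := N.toReal with hN'def
  set M' : ℝ := M.toReal with hM'def
  set I' : ℝ := I.toReal with hI'def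
  have hN'0 : 0 ≤ N' := ENNReal.toReal_nonneg
  have hM'0 : 0 ≤ M' := ENNReal.toReal_nonneg
  have hI'0 : 0 ≤ I' := ENNReal.toReal_nonneg
  have hkeyR : ∀ ε : ℝ, 0 < ε → N' ≤ M' * (C * ε) + I' / ε := by
    intro ε hε
    have h := hkey ε hε
    have hm : M * ENNReal.ofReal (C * ε) ≠ ⊤ :=
      (ENNReal.mul_lt_top hMfin ENNReal.ofReal_lt_top).ne
    have hi : I / ENNReal.ofReal ε ≠ ⊤ :=
      (ENNReal.div_lt_top hIfin.ne (ENNReal.ofReal_pos.2 hε).ne').ne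
    have h2 := ENNReal.toReal_mono (by rw [ENNReal.add_ne_top]; exact ⟨hm, hi⟩) h
    rwa [ENNReal.toReal_add hm hi, ENNReal.toReal_mul, ENNReal.toReal_div,
      ENNReal.toReal_ofReal (by positivity), ENNReal.toReal_ofReal hε.le] at h2
  have hmain : N' ^ 2 ≤ 4 * C * M' * I' := by
    rcases eq_or_lt_of_le hN'0 with hN0 | hNpos
    · rw [← hN0]
      have : (0:ℝ) ≤ 4 * C * M' * I' := by positivity
      simpa using this
    rcases eq_or_lt_of_le hM'0 with hM0 | hMpos
    · exfalso
      rcases eq_or_lt_of_le hI'0 with hI0 | hIpos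
      · have := hkeyR 1 one_pos
        rw [← hM0, ← hI0] at this
        simp at this
        linarith
      · have hεp : 0 < 2 * I' / N' := by positivity
        have h := hkeyR _ hεp
        rw [← hM0] at h
        have hIdiv : I' / (2 * I' / N') = N' / 2 := by
          field_simp
        rw [hIdiv] at h
        simp at h
        linarith
    · have hεp : 0 < N' / (2 * C * M') := by positivity
      have h := hkeyR _ hεp
      have he1 : M' * (C * (N' / (2 * C * M'))) = N' / 2 := by
        field_simp
      have he2 : I' / (N' / (2 * C * M')) = I' * (2 * C * M') / N' := by
        field_simp
      rw [he1, he2] at h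
      have h3 : N' / 2 ≤ I' * (2 * C * M') / N' := by linarith
      have h4 : N' / 2 * N' ≤ I' * (2 * C * M') := (le_div_iff₀ hNpos).1 h3
      nlinarith
  have hNoR : N = ENNReal.ofReal N' := (ENNReal.ofReal_toReal hNfin.ne).symm
  have hMoR : M = ENNReal.ofReal M' := (ENNReal.ofReal_toReal hMfin.ne).symm
  have hIoR : I = ENNReal.ofReal I' := (ENNReal.ofReal_toReal hIfin.ne).symm
  rw [hNoR, hMoR, hIoR, ← ENNReal.ofReal_pow hN'0,
    ← ENNReal.ofReal_mul (by positivity), ← ENNReal.ofReal_mul hM'0]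
  apply ENNReal.ofReal_le_ofReal
  have h5 : 1/(4*C) * (4*C*M'*I') = M' * I' := by field_simp
  nlinarith [mul_le_mul_of_nonneg_left hmain (show (0:ℝ) ≤ 1/(4*C) by positivity)]
end

section
/- Let Ω ⊂ ℝ^d be open and bounded and let φ̄ ∈ C¹(ℝ^d) satisfy the structural assumption ∇φ̄(x) ≠ 0 for every x ∈ {φ̄ = 0} ∩ cl(Ω). Let ū ∈ U_ad satisfy the first-order condition ∫_Ω φ̄ (u − ū) dλ^d ≥ 0 for all u ∈ U_ad. Then there exists c > 0 such that ∫_Ω φ̄ (u − ū) dλ^d ≥ c · ‖u − ū‖_{L¹(Ω)}² for all u ∈ U_ad. -/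
open MeasureTheory Set Metric

section Aux

variable {d : ℕ}


-- slice bound: along direction e with derivative ≥ m on the ball, two points of the
-- sublevel set on the same line are at distance ≤ 2ε/m
lemma slice_bound (φ : EuclideanSpace ℝ (Fin d) → ℝ) (hφ : ContDiff ℝ 1 φ)
    (x₀ e : EuclideanSpace ℝ (Fin d)) (m r ε t : ℝ)
    (hder : ∀ y ∈ closedBall x₀ r, m ≤ fderiv ℝ φ y e)
    (x : EuclideanSpace ℝ (Fin d)) (ht : 0 < t)
    (hx : x ∈ closedBall x₀ r) (hx' : x + t • e ∈ closedBall x₀ r)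
    (hφx : |φ x| ≤ ε) (hφx' : |φ (x + t • e)| ≤ ε) :
    m * t ≤ 2 * ε := by
  have hdiff := hφ.differentiable one_ne_zero
  set g : ℝ → ℝ := fun s => φ (x + s • e) with hg
  have hgd : ∀ s : ℝ, HasDerivAt g ((fderiv ℝ φ (x + s • e)) e) s := by
    intro s
    have hc : HasDerivAt (fun s : ℝ => x + s • e) e s := by
      simpa using ((hasDerivAt_id s).smul_const e).const_add x
    exact (hdiff (x + s • e)).hasFDerivAt.comp_hasDerivAt s hc
  have hmem : ∀ s ∈ Icc (0:ℝ) t, x + s • e ∈ closedBall x₀ r := by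
    intro s hs
    have h1 : x + s • e = x + (s / t) • ((x + t • e) - x) := by
      rw [add_sub_cancel_left, smul_smul, div_mul_cancel₀]
      exact ne_of_gt ht
    rw [h1]
    exact (convex_closedBall x₀ r).add_smul_sub_mem hx hx'
      ⟨div_nonneg hs.1 ht.le, div_le_one_of_le₀ hs.2 ht.le⟩
  have key := Convex.mul_sub_le_image_sub_of_le_deriv (convex_Icc (0:ℝ) t)
    (f := g) (Continuous.continuousOn (by
      have : Continuous (fun s : ℝ => x + s • e) := by continuity
      exact hφ.continuous.comp this))
    (fun s _ => (hgd s).differentiableAt.differentiableWithinAt)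
    (C := m) ?_ 0 ⟨le_refl 0, ht.le⟩ t ⟨ht.le, le_refl t⟩ ht.le
  · have h0 : g 0 = φ x := by simp [hg]
    have habs : g t - g 0 ≤ 2 * ε := by
      rw [h0]
      have := abs_le.1 hφx
      have := abs_le.1 hφx'
      simp only [hg]
      linarith [(abs_le.1 hφx).1, (abs_le.1 hφx').1]
    calc m * t = m * (t - 0) := by ring
      _ ≤ g t - g 0 := key
      _ ≤ 2 * ε := habs
  · intro s hs
    rw [interior_Icc] at hs
    rw [(hgd s).deriv]
    exact hder _ (hmem s ⟨hs.1.le, hs.2.le⟩)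
-- local measure estimate
lemma loc_est (φ : EuclideanSpace ℝ (Fin d) → ℝ) (hφ : ContDiff ℝ 1 φ)
    (x₀ e : EuclideanSpace ℝ (Fin d)) (he : ‖e‖ = 1) (m r : ℝ) (hm : 0 < m) (hr : 0 < r)
    (hder : ∀ y ∈ closedBall x₀ r, m ≤ fderiv ℝ φ y e)
    (ε : ℝ) (hε : 0 < ε) (hεm : ε ≤ m * r / 6) :
    volume {x | x ∈ closedBall x₀ r ∧ |φ x| ≤ ε}
      ≤ ENNReal.ofReal ((6 / (m * r) * (volume (closedBall x₀ (2*r))).toReal) * ε) := by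
  set A : Set (EuclideanSpace ℝ (Fin d)) := {x | x ∈ closedBall x₀ r ∧ |φ x| ≤ ε} with hA
  have hAclosed : IsClosed A := by
    have : A = closedBall x₀ r ∩ (fun x => |φ x|) ⁻¹' (Iic ε) := by
      ext x; simp [hA]
    rw [this]
    exact isClosed_closedBall.inter (IsClosed.preimage (hφ.continuous.abs) isClosed_Iic)
  have hAmeas : MeasurableSet A := hAclosed.measurableSet
  set s : ℝ := 3 * ε / m with hs
  have hspos : 0 < s := by positivity
  have hsr : 2 * s ≤ r := by
    have h6 : 6 * ε ≤ m * r := by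
      have := (le_div_iff₀ (by norm_num : (0:ℝ) < 6)).mp hεm
      linarith
    rw [hs, show 2 * (3 * ε / m) = 6 * ε / m by ring, div_le_iff₀ hm]
    linarith
  set n : ℕ := ⌊r / s⌋₊ with hn
  have hn2 : 2 ≤ n := by
    rw [hn]
    have : (2:ℝ) ≤ r / s := by rw [le_div_iff₀ hspos]; linarith
    exact_mod_cast Nat.le_floor (by exact_mod_cast this)
  have hns : (n : ℝ) * s ≤ r := by
    rw [← le_div_iff₀ hspos]
    exact Nat.floor_le (by positivity)
  have hnge : r / (2 * s) ≤ (n : ℝ) := by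
    have h1 : r / s - 1 ≤ (n : ℝ) := le_of_lt (by
      have := Nat.lt_floor_add_one (r / s)
      linarith)
    have hq : (2:ℝ) ≤ r / s := by rw [le_div_iff₀ hspos]; linarith
    have h3 : r / (2*s) = (r / s) / 2 := by
      rw [div_div]; ring_nf
    rw [h3]
    linarith
  -- translates
  set w : EuclideanSpace ℝ (Fin d) := s • e with hw
  set B : ℕ → Set (EuclideanSpace ℝ (Fin d)) := fun k => (fun x => -((k:ℝ) • w) + x) ⁻¹' A with hB
  have hBmeas : ∀ k, MeasurableSet (B k) := fun k =>
    hAmeas.preimage (measurable_const_add _)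
  have hBvol : ∀ k, volume (B k) = volume A := fun k =>
    measure_preimage_add volume _ A
  have hBsub : ∀ k < n, B k ⊆ closedBall x₀ (2*r) := by
    intro k hk x hx
    have hxk : -((k:ℝ) • w) + x ∈ A := hx
    have h1 : ‖-((k:ℝ) • w) + x - x₀‖ ≤ r := mem_closedBall_iff_norm.1 hxk.1
    have hwn : ‖(k:ℝ) • w‖ = (k:ℝ) * s := by
      rw [hw, norm_smul, norm_smul, he]
      rw [Real.norm_eq_abs, Real.norm_eq_abs, abs_of_nonneg hspos.le, Nat.abs_cast]
      ring
    have : ‖x - x₀‖ ≤ r + (k:ℝ) * s := by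
      have hxx : (-((k:ℝ) • w) + x - x₀) + (k:ℝ) • w = x - x₀ := by abel
      calc ‖x - x₀‖ = ‖(-((k:ℝ) • w) + x - x₀) + (k:ℝ) • w‖ := by rw [hxx]
        _ ≤ ‖-((k:ℝ) • w) + x - x₀‖ + ‖(k:ℝ) • w‖ := norm_add_le _ _
        _ ≤ r + (k:ℝ) * s := by rw [hwn]; linarith
    have hks : (k:ℝ) * s ≤ r := by
      calc (k:ℝ) * s ≤ (n:ℝ) * s := by
            apply mul_le_mul_of_nonneg_right _ hspos.le
            exact_mod_cast hk.le
        _ ≤ r := hns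
    rw [mem_closedBall_iff_norm]
    linarith
  have hdisj : ∀ j k, j < k → k < n → Disjoint (B j) (B k) := by
    intro j k hjk _
    rw [Set.disjoint_left]
    rintro x hxj hxk
    have haj : -((j:ℝ) • w) + x ∈ A := hxj
    have hak : -((k:ℝ) • w) + x ∈ A := hxk
    set a := -((k:ℝ) • w) + x with ha
    have heq : -((j:ℝ) • w) + x = a + (((k:ℝ) - j) * s) • e := by
      rw [ha, hw]
      module
    set t : ℝ := ((k:ℝ) - j) * s with htdef
    have htpos : 0 < t := by
      apply mul_pos _ hspos
      simp only [sub_pos]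
      exact_mod_cast hjk
    have hb := slice_bound φ hφ x₀ e m r ε t hder a htpos hak.1
      (by rw [← heq]; exact haj.1) hak.2 (by rw [← heq]; exact haj.2)
    -- m * t ≤ 2ε but t ≥ s = 3ε/m so m*t ≥ 3ε > 2ε
    have hts : s ≤ t := by
      rw [htdef]
      nlinarith [hspos, (by exact_mod_cast Nat.succ_le_of_lt hjk : (j:ℝ) + 1 ≤ k)]
    have : 3 * ε ≤ m * t := by
      rw [hs] at hts
      calc 3 * ε = m * (3 * ε / m) := by field_simp
        _ ≤ m * t := by apply mul_le_mul_of_nonneg_left hts hm.le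
    linarith
  -- counting
  have hcount : (n : ENNReal) * volume A ≤ volume (closedBall x₀ (2*r)) := by
    have hunion : volume (⋃ k ∈ Finset.range n, B k) = ∑ k ∈ Finset.range n, volume (B k) := by
      apply measure_biUnion_finset _ (fun k _ => hBmeas k)
      intro j hj k hk hjk
      rcases lt_or_gt_of_ne hjk with h | h
      · exact hdisj j k h (Finset.mem_range.1 hk)
      · exact (hdisj k j h (Finset.mem_range.1 hj)).symm
    have hsum : ∑ k ∈ Finset.range n, volume (B k) = n * volume A := by
      simp [hBvol, Finset.sum_const]
    have hsub : (⋃ k ∈ Finset.range n, B k) ⊆ closedBall x₀ (2*r) := by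
      intro x hx
      simp only [Set.mem_iUnion] at hx
      obtain ⟨k, hk, hxk⟩ := hx
      exact hBsub k (Finset.mem_range.1 hk) hxk
    calc (n : ENNReal) * volume A = volume (⋃ k ∈ Finset.range n, B k) := by
          rw [hunion, hsum]
      _ ≤ volume (closedBall x₀ (2*r)) := measure_mono hsub
  -- conclude
  have hVfin : volume (closedBall x₀ (2*r)) ≠ ⊤ := measure_closedBall_lt_top.ne
  have hnn : ENNReal.ofReal (r / (2*s)) ≤ (n : ENNReal) := by
    rw [← ENNReal.ofReal_natCast]
    exact ENNReal.ofReal_le_ofReal hnge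
  have h1 : ENNReal.ofReal (r / (2*s)) * volume A ≤ volume (closedBall x₀ (2*r)) :=
    le_trans (mul_le_mul_left hnn _) hcount
  have hAfin : volume A ≠ ⊤ :=
    ((measure_mono (fun x hx => hx.1)).trans_lt measure_closedBall_lt_top).ne
  have hfinal : volume A ≤ ENNReal.ofReal (2*s/r) * volume (closedBall x₀ (2*r)) := by
    have hpos : 0 < r / (2*s) := by positivity
    calc volume A = ENNReal.ofReal (2*s/r) * (ENNReal.ofReal (r/(2*s)) * volume A) := by
          rw [← mul_assoc, ← ENNReal.ofReal_mul (by positivity)]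
          rw [show 2*s/r * (r/(2*s)) = 1 by field_simp]
          simp
      _ ≤ ENNReal.ofReal (2*s/r) * volume (closedBall x₀ (2*r)) :=
          mul_le_mul_right h1 _
  calc volume A ≤ ENNReal.ofReal (2*s/r) * volume (closedBall x₀ (2*r)) := hfinal
    _ = ENNReal.ofReal (6 / (m * r) * (volume (closedBall x₀ (2*r))).toReal * ε) := by
        rw [← ENNReal.ofReal_toReal hVfin, ← ENNReal.ofReal_mul (by positivity)]
        congr 1
        rw [ENNReal.toReal_ofReal ENNReal.toReal_nonneg]
        rw [hs]
        field_simp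
        ring
-- pointwise: structural assumption gives local data
lemma point_data (φ : EuclideanSpace ℝ (Fin d) → ℝ) (hφ : ContDiff ℝ 1 φ)
    (x₀ : EuclideanSpace ℝ (Fin d)) (h0 : fderiv ℝ φ x₀ ≠ 0) :
    ∃ r C em : ℝ, 0 < r ∧ 0 < C ∧ 0 < em ∧ ∀ ε, 0 < ε → ε ≤ em →
      volume {x | x ∈ closedBall x₀ r ∧ |φ x| ≤ ε} ≤ ENNReal.ofReal (C * ε) := by
  set L := fderiv ℝ φ x₀ with hL
  have hLnorm : 0 < ‖L‖ := norm_pos_iff.2 h0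
  -- unit vector with L e = ‖L‖
  obtain ⟨e, he, hLe⟩ : ∃ e : EuclideanSpace ℝ (Fin d), ‖e‖ = 1 ∧ L e = ‖L‖ := by
    set y := (InnerProductSpace.toDual ℝ (EuclideanSpace ℝ (Fin d))).symm L with hy
    have hyL : ∀ x, L x = inner ℝ y x := by
      intro x
      rw [hy, InnerProductSpace.toDual_symm_apply]
    have hyn : ‖y‖ = ‖L‖ := by
      rw [hy]; exact (LinearIsometryEquiv.norm_map _ L)
    have hypos : 0 < ‖y‖ := hyn ▸ hLnorm
    refine ⟨‖y‖⁻¹ • y, ?_, ?_⟩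
    · rw [norm_smul, norm_inv, norm_norm, inv_mul_cancel₀ hypos.ne']
    · rw [hyL, inner_smul_right, real_inner_self_eq_norm_sq, ← hyn]
      field_simp
  set m := ‖L‖ / 2 with hmdef
  have hm : 0 < m := by positivity
  -- continuity of the derivative gives the uniform lower bound near x₀
  have hcont : Continuous (fun x => (fderiv ℝ φ x) e) :=
    (hφ.continuous_fderiv one_ne_zero).clm_apply continuous_const
  have hval : (fun x => (fderiv ℝ φ x) e) x₀ = 2 * m := by
    simp only [← hL, hLe, hmdef]; ring
  have hlt : m < (fun x => (fderiv ℝ φ x) e) x₀ := by rw [hval]; linarith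
  have hev : (fun x => (fderiv ℝ φ x) e) ⁻¹' Ioi m ∈ nhds x₀ :=
    hcont.continuousAt.preimage_mem_nhds (Ioi_mem_nhds hlt)
  obtain ⟨r, hr, hball⟩ : ∃ r > 0, ∀ y ∈ closedBall x₀ r, m ≤ (fderiv ℝ φ y) e := by
    rcases Metric.mem_nhds_iff.1 hev with ⟨r', hr', h'⟩
    refine ⟨r'/2, by positivity, fun y hy => ?_⟩
    have : y ∈ ball x₀ r' := lt_of_le_of_lt (mem_closedBall.1 hy) (by linarith [mem_closedBall.1 hy])
    exact (h' this).le
  refine ⟨r, 6 / (m * r) * (volume (closedBall x₀ (2*r))).toReal + 1, m * r / 6,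
    hr, by positivity, by positivity, ?_⟩
  intro ε hε hεm
  refine le_trans (loc_est φ hφ x₀ e he m r hm hr hball ε hε hεm) ?_
  apply ENNReal.ofReal_le_ofReal
  nlinarith [hε.le]

-- global estimate
lemma glob_est (Ω : Set (EuclideanSpace ℝ (Fin d)))
    (hΩb : Bornology.IsBounded Ω)
    (φ : EuclideanSpace ℝ (Fin d) → ℝ) (hφ : ContDiff ℝ 1 φ)
    (hstruct : ∀ x ∈ closure Ω, φ x = 0 → fderiv ℝ φ x ≠ 0) :
    ∃ C : ℝ, 0 < C ∧ ∀ ε : ℝ, 0 < ε →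
      volume {x | x ∈ Ω ∧ |φ x| ≤ ε} ≤ ENNReal.ofReal (C * ε) := by
  have hclcomp : IsCompact (closure Ω) := hΩb.isCompact_closure
  set K : Set (EuclideanSpace ℝ (Fin d)) := {x | x ∈ closure Ω ∧ φ x = 0} with hK
  have hKcomp : IsCompact K := by
    apply hclcomp.of_isClosed_subset
    · exact isClosed_closure.inter (isClosed_eq hφ.continuous continuous_const)
    · exact fun x hx => hx.1
  -- choice of local data
  have hchoice : ∀ x : EuclideanSpace ℝ (Fin d), ∃ r C em : ℝ, 0 < r ∧
      (x ∈ K → (0 < C ∧ 0 < em ∧ ∀ ε, 0 < ε → ε ≤ em →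
        volume {y | y ∈ closedBall x r ∧ |φ y| ≤ ε} ≤ ENNReal.ofReal (C * ε))) := by
    intro x
    by_cases hx : x ∈ K
    · obtain ⟨r, C, em, hr, hC, hem, hest⟩ := point_data φ hφ x (hstruct x hx.1 hx.2)
      exact ⟨r, C, em, hr, fun _ => ⟨hC, hem, hest⟩⟩
    · exact ⟨1, 1, 1, one_pos, fun h => absurd h hx⟩
  choose rf Cf emf hrf hdata using hchoice
  -- finite subcover
  have hcover : K ⊆ ⋃ x ∈ K, ball x (rf x) := fun x hx =>
    mem_biUnion hx (mem_ball_self (hrf x))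
  obtain ⟨t, htK, htfin, htcov⟩ :=
    hKcomp.elim_finite_subcover_image (fun x _ => isOpen_ball) hcover
  -- positive threshold below which Ω∩{|φ|≤ε} is inside the cover
  set U : Set (EuclideanSpace ℝ (Fin d)) := ⋃ x ∈ t, ball x (rf x) with hU
  have hUopen : IsOpen U := isOpen_biUnion (fun x _ => isOpen_ball)
  set K' : Set (EuclideanSpace ℝ (Fin d)) := closure Ω \ U with hK'
  have hK'comp : IsCompact K' := hclcomp.diff hUopen
  have hK'pos : ∀ x ∈ K', 0 < |φ x| := by
    intro x hx
    rcases eq_or_ne (φ x) 0 with h | h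
    · exact absurd (htcov ⟨hx.1, h⟩) hx.2
    · exact abs_pos.2 h
  obtain ⟨ε₀, hε₀, hK'lb⟩ : ∃ ε₀ > 0, ∀ x ∈ K', ε₀ ≤ |φ x| := by
    rcases K'.eq_empty_or_nonempty with h | h
    · exact ⟨1, one_pos, fun x hx => absurd hx (h ▸ notMem_empty x)⟩
    · obtain ⟨z, hz, hzmin⟩ := hK'comp.exists_isMinOn h (hφ.continuous.abs.continuousOn)
      exact ⟨|φ z|, hK'pos z hz, fun x hx => hzmin hx⟩
  -- threshold and constant
  set tf := htfin.toFinset with htf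
  obtain ⟨ε₁, hε₁, hε₁0, hε₁t⟩ : ∃ ε₁ : ℝ, 0 < ε₁ ∧ ε₁ ≤ ε₀ / 2 ∧ ∀ x ∈ tf, ε₁ ≤ emf x := by
    by_cases hne : tf.Nonempty
    · set μm := tf.inf' hne emf with hμ
      obtain ⟨z, hz, hzval⟩ := tf.exists_mem_eq_inf' hne emf
      have hzK : z ∈ K := htK (htfin.mem_toFinset.1 hz)
      have hμpos : 0 < μm := by rw [hμ, hzval]; exact (hdata z hzK).2.1
      refine ⟨min (ε₀/2) μm, lt_min (by positivity) hμpos, min_le_left _ _, ?_⟩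
      intro x hx
      exact le_trans (min_le_right _ _) (Finset.inf'_le _ hx)
    · exact ⟨ε₀/2, by positivity, le_refl _, fun x hx => absurd ⟨x, hx⟩ hne⟩
  have hvolΩ : volume (closure Ω) < ⊤ := hclcomp.measure_lt_top
  set Csum : ℝ := ∑ x ∈ tf, Cf x with hCsum
  have hCsumnn : 0 ≤ Csum := Finset.sum_nonneg (fun x hx =>
    ((hdata x (htK (htfin.mem_toFinset.1 hx))).1).le)
  refine ⟨Csum + (volume (closure Ω)).toReal / ε₁ + 1, by positivity, ?_⟩
  intro ε hε
  by_cases hcase : ε ≤ ε₁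
  · -- small ε: covered by the balls
    have hsub : {x | x ∈ Ω ∧ |φ x| ≤ ε} ⊆ ⋃ x ∈ tf, {y | y ∈ closedBall x (rf x) ∧ |φ y| ≤ ε} := by
      rintro x ⟨hx1, hx2⟩
      have hxcl : x ∈ closure Ω := subset_closure hx1
      have hxU : x ∈ U := by
        by_contra hxU
        have : ε₀ ≤ |φ x| := hK'lb x ⟨hxcl, hxU⟩
        linarith [hx2]
      rw [hU] at hxU
      simp only [mem_iUnion] at hxU
      obtain ⟨z, hz, hxz⟩ := hxU
      exact mem_biUnion (htfin.mem_toFinset.2 hz) ⟨ball_subset_closedBall hxz, hx2⟩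
    calc volume {x | x ∈ Ω ∧ |φ x| ≤ ε} ≤ ∑ x ∈ tf, volume {y | y ∈ closedBall x (rf x) ∧ |φ y| ≤ ε} :=
          le_trans (measure_mono hsub) (measure_biUnion_finset_le tf _)
      _ ≤ ∑ x ∈ tf, ENNReal.ofReal (Cf x * ε) := by
          apply Finset.sum_le_sum
          intro x hx
          have hxK := htK (htfin.mem_toFinset.1 hx)
          exact (hdata x hxK).2.2 ε hε (le_trans hcase (hε₁t x hx))
      _ = ENNReal.ofReal (Csum * ε) := by
          rw [← ENNReal.ofReal_sum_of_nonneg (fun x hx =>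
            mul_nonneg ((hdata x (htK (htfin.mem_toFinset.1 hx))).1).le hε.le)]
          rw [hCsum, Finset.sum_mul]
      _ ≤ ENNReal.ofReal ((Csum + (volume (closure Ω)).toReal / ε₁ + 1) * ε) := by
          apply ENNReal.ofReal_le_ofReal
          have : 0 ≤ (volume (closure Ω)).toReal / ε₁ := by positivity
          nlinarith
  · -- large ε: bound by total measure
    push_neg at hcase
    calc volume {x | x ∈ Ω ∧ |φ x| ≤ ε} ≤ volume (closure Ω) :=
          measure_mono (fun x hx => subset_closure hx.1)
      _ = ENNReal.ofReal ((volume (closure Ω)).toReal) := (ENNReal.ofReal_toReal hvolΩ.ne).symm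
      _ ≤ ENNReal.ofReal ((Csum + (volume (closure Ω)).toReal / ε₁ + 1) * ε) := by
          apply ENNReal.ofReal_le_ofReal
          have h1 : (volume (closure Ω)).toReal ≤ (volume (closure Ω)).toReal / ε₁ * ε := by
            rw [div_mul_eq_mul_div, le_div_iff₀ hε₁]
            apply mul_le_mul_of_nonneg_left hcase.le ENNReal.toReal_nonneg
          nlinarith

end Aux

set_option maxHeartbeats 1000000 in
/-- Under the structural assumption on the adjoint state `φ̄`, a
stationary point `ū` of the bang-bang control problem satisfies the quadratic growth
inequality `∫_Ω φ̄ (u − ū) dλ^d ≥ c ‖u − ū‖_{L¹(Ω)}²` for all admissible `u`,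
where `U_ad = {v ∈ L^∞(Ω) : |v| ≤ 1 a.e.}`. -/
theorem stmt11 (d : ℕ) (Ω : Set (EuclideanSpace ℝ (Fin d)))
    (hΩo : IsOpen Ω) (hΩb : Bornology.IsBounded Ω)
    (φ : EuclideanSpace ℝ (Fin d) → ℝ) (hφ : ContDiff ℝ 1 φ)
    (hstruct : ∀ x ∈ closure Ω, φ x = 0 → fderiv ℝ φ x ≠ 0)
    (ubar : EuclideanSpace ℝ (Fin d) → ℝ)
    (hubarmeas : AEStronglyMeasurable ubar (volume.restrict Ω))
    (hubar1 : ∀ᵐ x ∂(volume.restrict Ω), |ubar x| ≤ 1)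
    (hFON : ∀ u : EuclideanSpace ℝ (Fin d) → ℝ,
      AEStronglyMeasurable u (volume.restrict Ω) →
      (∀ᵐ x ∂(volume.restrict Ω), |u x| ≤ 1) →
      0 ≤ ∫ x in Ω, φ x * (u x - ubar x)) :
    ∃ c : ℝ, 0 < c ∧ ∀ u : EuclideanSpace ℝ (Fin d) → ℝ,
      AEStronglyMeasurable u (volume.restrict Ω) →
      (∀ᵐ x ∂(volume.restrict Ω), |u x| ≤ 1) →
      c * (∫ x in Ω, |u x - ubar x|) ^ 2 ≤ ∫ x in Ω, φ x * (u x - ubar x) := by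
  obtain ⟨C, hC, hest⟩ := glob_est Ω hΩb φ hφ hstruct
  have hΩfin : volume Ω ≠ ⊤ :=
    ((measure_mono subset_closure).trans_lt hΩb.isCompact_closure.measure_lt_top).ne
  haveI : IsFiniteMeasure (volume.restrict Ω) :=
    ⟨by rw [Measure.restrict_apply_univ]; exact lt_of_le_of_ne le_top hΩfin⟩
  -- bound for φ on Ω
  obtain ⟨Mφ, hMφ0, hMφ⟩ : ∃ M : ℝ, 0 ≤ M ∧ ∀ x ∈ Ω, |φ x| ≤ M := by
    obtain ⟨M, hM⟩ := hΩb.isCompact_closure.exists_bound_of_continuousOn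
      (hφ.continuous.abs.continuousOn)
    refine ⟨max M 0, le_max_right _ _, fun x hx => ?_⟩
    have := hM x (subset_closure hx)
    rw [Real.norm_eq_abs, abs_abs] at this
    exact this.trans (le_max_left _ _)
  have hφmeas : AEStronglyMeasurable φ (volume.restrict Ω) :=
    hφ.continuous.aestronglyMeasurable
  have hφbd : ∀ᵐ x ∂(volume.restrict Ω), |φ x| ≤ Mφ := by
    filter_upwards [ae_restrict_mem hΩo.measurableSet] with x hx using hMφ x hx
  -- Step B: the bang-bang structure of ubar
  set u₀ : EuclideanSpace ℝ (Fin d) → ℝ := fun x => if 0 < φ x then -1 else 1 with hu₀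
  have hu₀meas : AEStronglyMeasurable u₀ (volume.restrict Ω) := by
    apply Measurable.aestronglyMeasurable
    exact Measurable.ite (measurableSet_lt measurable_const hφ.continuous.measurable)
      measurable_const measurable_const
  have hu₀1 : ∀ᵐ x ∂(volume.restrict Ω), |u₀ x| ≤ 1 := by
    filter_upwards with x
    rw [hu₀]
    by_cases h : 0 < φ x <;> simp [h]
  have hFON0 := hFON u₀ hu₀meas hu₀1
  set g : EuclideanSpace ℝ (Fin d) → ℝ := fun x => φ x * (ubar x - u₀ x) with hg
  have hgnonneg : ∀ᵐ x ∂(volume.restrict Ω), 0 ≤ g x := by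
    filter_upwards [hubar1] with x hx
    show 0 ≤ φ x * (ubar x - if 0 < φ x then -1 else 1)
    rcases lt_or_ge 0 (φ x) with h | h
    · rw [if_pos h]
      have : (-1:ℝ) ≤ ubar x := (abs_le.1 hx).1
      nlinarith
    · rw [if_neg (not_lt.2 h)]
      have : ubar x ≤ 1 := (abs_le.1 hx).2
      nlinarith
  have hgint : Integrable g (volume.restrict Ω) := by
    refine (integrable_const (Mφ * 2)).mono' ?_ ?_
    · exact hφmeas.mul (hubarmeas.sub hu₀meas)
    · filter_upwards [hφbd, hubar1, hu₀1] with x h1 h2 h3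
      rw [hg, Real.norm_eq_abs, abs_mul]
      have : |ubar x - u₀ x| ≤ 2 := by
        calc |ubar x - u₀ x| ≤ |ubar x| + |u₀ x| := abs_sub _ _
          _ ≤ 2 := by linarith
      exact mul_le_mul h1 this (abs_nonneg _) hMφ0
  have hgzero : ∀ᵐ x ∂(volume.restrict Ω), g x = 0 := by
    have hneg : ∫ x in Ω, g x = -∫ x in Ω, φ x * (u₀ x - ubar x) := by
      rw [← integral_neg]
      apply integral_congr_ae
      filter_upwards with x
      rw [hg]; ring
    have hle : ∫ x in Ω, g x ≤ 0 := by rw [hneg]; linarith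
    have hge : 0 ≤ ∫ x in Ω, g x := integral_nonneg_of_ae hgnonneg
    have : ∫ x in Ω, g x = 0 := le_antisymm hle hge
    exact (integral_eq_zero_iff_of_nonneg_ae hgnonneg hgint).1 this
  -- conclusion
  refine ⟨1 / (8 * C), by positivity, ?_⟩
  intro u humeas hu1
  set w : EuclideanSpace ℝ (Fin d) → ℝ := fun x => u x - ubar x with hw
  have hwmeas : AEStronglyMeasurable w (volume.restrict Ω) := humeas.sub hubarmeas
  have hwbd : ∀ᵐ x ∂(volume.restrict Ω), |w x| ≤ 2 := by
    filter_upwards [hu1, hubar1] with x h1 h2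
    calc |w x| ≤ |u x| + |ubar x| := abs_sub _ _
      _ ≤ 2 := by linarith
  have hwint : Integrable w (volume.restrict Ω) :=
    (integrable_const 2).mono' hwmeas (by
      filter_upwards [hwbd] with x h using by rwa [Real.norm_eq_abs])
  have hawint : Integrable (fun x => |w x|) (volume.restrict Ω) := hwint.abs
  -- pointwise a.e. identity
  have heq : ∀ᵐ x ∂(volume.restrict Ω), φ x * w x = |φ x| * |w x| := by
    filter_upwards [hgzero, hu1, hubar1] with x hgx hux hubx
    have hgx' : φ x * (ubar x - if 0 < φ x then -1 else 1) = 0 := hgx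
    show φ x * (u x - ubar x) = |φ x| * |u x - ubar x|
    rcases lt_trichotomy (φ x) 0 with h | h | h
    · rw [if_neg (not_lt.2 h.le)] at hgx'
      have hub : ubar x = 1 := by
        rcases mul_eq_zero.1 hgx' with h' | h'
        · exact absurd h' h.ne
        · linarith
      rw [hub]
      have hle : u x - 1 ≤ 0 := by linarith [(abs_le.1 hux).2]
      rw [abs_of_neg h, abs_of_nonpos hle]
      ring
    · rw [h]; simp
    · rw [if_pos h] at hgx'
      have hub : ubar x = -1 := by
        rcases mul_eq_zero.1 hgx' with h' | h'
        · exact absurd h' h.ne'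
        · linarith
      rw [hub]
      have hle : 0 ≤ u x - (-1) := by linarith [(abs_le.1 hux).1]
      rw [abs_of_pos h, abs_of_nonneg hle]
  have hIeq : ∫ x in Ω, φ x * w x = ∫ x in Ω, |φ x| * |w x| := integral_congr_ae heq
  set N : ℝ := ∫ x in Ω, |w x| with hN
  have hNnn : 0 ≤ N := integral_nonneg (fun x => abs_nonneg _)
  have hφameas : AEStronglyMeasurable (fun x => |φ x|) (volume.restrict Ω) :=
    hφmeas.norm.congr (by filter_upwards with x using (Real.norm_eq_abs _))
  have hwameas : AEStronglyMeasurable (fun x => |w x|) (volume.restrict Ω) :=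
    hwmeas.norm.congr (by filter_upwards with x using (Real.norm_eq_abs _))
  have hIint : Integrable (fun x => |φ x| * |w x|) (volume.restrict Ω) := by
    refine (integrable_const (Mφ * 2)).mono' (hφameas.mul hwameas) ?_
    filter_upwards [hφbd, hwbd] with x h1 h2
    rw [Real.norm_eq_abs, abs_mul, abs_abs, abs_abs]
    exact mul_le_mul h1 h2 (abs_nonneg _) hMφ0
  have hInn : 0 ≤ ∫ x in Ω, |φ x| * |w x| :=
    integral_nonneg (fun x => mul_nonneg (abs_nonneg _) (abs_nonneg _))
  -- the key lower bound
  have hKey : ∀ ε : ℝ, 0 < ε → ε * (N - 2 * (C * ε)) ≤ ∫ x in Ω, |φ x| * |w x| := by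
    intro ε hε
    set P : Set (EuclideanSpace ℝ (Fin d)) := {x | ε < |φ x|} with hP
    have hPmeas : MeasurableSet P :=
      measurableSet_lt measurable_const hφ.continuous.measurable.abs
    have h1 : ∫ x in P, |φ x| * |w x| ∂(volume.restrict Ω) ≤ ∫ x in Ω, |φ x| * |w x| := by
      apply setIntegral_le_integral hIint
      filter_upwards with x using mul_nonneg (abs_nonneg _) (abs_nonneg _)
    have h2 : ε * ∫ x in P, |w x| ∂(volume.restrict Ω)
        ≤ ∫ x in P, |φ x| * |w x| ∂(volume.restrict Ω) := by
      rw [← integral_const_mul]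
      apply integral_mono_ae (hawint.integrableOn.const_mul ε) hIint.integrableOn
      exact (ae_restrict_iff' hPmeas).2 (by
        filter_upwards with x hx
        exact mul_le_mul_of_nonneg_right (le_of_lt hx) (abs_nonneg _))
    have h3 : ∫ x in P, |w x| ∂(volume.restrict Ω)
        = N - ∫ x in Pᶜ, |w x| ∂(volume.restrict Ω) := by
      have := integral_add_compl hPmeas hawint
      rw [hN]; linarith
    have h4 : ∫ x in Pᶜ, |w x| ∂(volume.restrict Ω) ≤ 2 * (C * ε) := by
      have hb : ∫ x in Pᶜ, |w x| ∂(volume.restrict Ω)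
          ≤ ∫ _x in Pᶜ, (2:ℝ) ∂(volume.restrict Ω) := by
        apply integral_mono_ae hawint.integrableOn (integrable_const 2)
        exact ae_restrict_of_ae hwbd
      have hc : ∫ _x in Pᶜ, (2:ℝ) ∂(volume.restrict Ω)
          = 2 * ((volume.restrict Ω) Pᶜ).toReal := by
        rw [setIntegral_const]; rw [smul_eq_mul, measureReal_def]; ring
      have hvol : ((volume.restrict Ω) Pᶜ).toReal ≤ C * ε := by
        have hres : (volume.restrict Ω) Pᶜ = volume (Pᶜ ∩ Ω) :=
          Measure.restrict_apply hPmeas.compl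
        have hseteq : Pᶜ ∩ Ω = {x | x ∈ Ω ∧ |φ x| ≤ ε} := by
          ext x
          simp only [hP, mem_inter_iff, mem_compl_iff, mem_setOf_eq, not_lt]
          tauto
        rw [hres, hseteq]
        exact ENNReal.toReal_le_of_le_ofReal (by positivity) (hest ε hε)
      linarith
    calc ε * (N - 2 * (C * ε)) ≤ ε * (N - ∫ x in Pᶜ, |w x| ∂(volume.restrict Ω)) := by
          apply mul_le_mul_of_nonneg_left _ hε.le
          linarith
      _ = ε * ∫ x in P, |w x| ∂(volume.restrict Ω) := by rw [h3]
      _ ≤ ∫ x in P, |φ x| * |w x| ∂(volume.restrict Ω) := h2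
      _ ≤ ∫ x in Ω, |φ x| * |w x| := h1
  -- finish
  have hgoal : 1 / (8*C) * N ^ 2 ≤ ∫ x in Ω, |φ x| * |w x| := by
    rcases eq_or_lt_of_le hNnn with h | h
    · rw [← h]; simpa using hInn
    · have := hKey (N / (4*C)) (by positivity)
      have harith : N / (4*C) * (N - 2 * (C * (N / (4*C)))) = 1 / (8*C) * N ^ 2 := by
        field_simp
        ring
      linarith [harith ▸ this]
  calc 1 / (8*C) * (∫ x in Ω, |u x - ubar x|) ^ 2 = 1 / (8*C) * N ^ 2 := by rw [hN]
    _ ≤ ∫ x in Ω, |φ x| * |w x| := hgoal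
    _ = ∫ x in Ω, φ x * (u x - ubar x) := by rw [← hIeq]
end

section
/- Let Ω ⊂ ℝ^d be a Borel set with λ^d(Ω) < ∞, let φ̄ ∈ L¹(Ω), and let ū ∈ U_ad. If ∫_Ω φ̄ (u − ū) dλ^d ≥ 0 for all u ∈ U_ad, then for every u ∈ U_ad one has φ̄·(u − ū) ≥ 0 almost everywhere in Ω, and consequently ∫_Ω φ̄ (u − ū) dλ^d = ∫_Ω |φ̄ (u − ū)| dλ^d. -/
open MeasureTheory Set

/-- If `ū ∈ U_ad` satisfies the first-order condition
`∫_Ω φ̄ (u − ū) ≥ 0` for all `u ∈ U_ad`, then for every `u ∈ U_ad` we have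
`φ̄·(u − ū) ≥ 0` a.e. in `Ω` and `∫_Ω φ̄ (u − ū) = ∫_Ω |φ̄ (u − ū)|`. -/
theorem stmt12 (d : ℕ) (Ω : Set (EuclideanSpace ℝ (Fin d))) (hΩ : MeasurableSet Ω)
    (hΩfin : volume Ω < ⊤)
    (φ : EuclideanSpace ℝ (Fin d) → ℝ) (hφ : Integrable φ (volume.restrict Ω))
    (ubar : EuclideanSpace ℝ (Fin d) → ℝ)
    (hubarmeas : AEStronglyMeasurable ubar (volume.restrict Ω))
    (hubar1 : ∀ᵐ x ∂(volume.restrict Ω), |ubar x| ≤ 1)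
    (hFON : ∀ u : EuclideanSpace ℝ (Fin d) → ℝ,
      AEStronglyMeasurable u (volume.restrict Ω) →
      (∀ᵐ x ∂(volume.restrict Ω), |u x| ≤ 1) →
      0 ≤ ∫ x in Ω, φ x * (u x - ubar x)) :
    ∀ u : EuclideanSpace ℝ (Fin d) → ℝ,
      AEStronglyMeasurable u (volume.restrict Ω) →
      (∀ᵐ x ∂(volume.restrict Ω), |u x| ≤ 1) →
      (∀ᵐ x ∂(volume.restrict Ω), 0 ≤ φ x * (u x - ubar x)) ∧
      ∫ x in Ω, φ x * (u x - ubar x) = ∫ x in Ω, |φ x * (u x - ubar x)| := by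
  intro u humeas hu1
  set μ := volume.restrict Ω with hμ
  set g : EuclideanSpace ℝ (Fin d) → ℝ := fun x => φ x * (u x - ubar x) with hgdef
  have hgm : AEStronglyMeasurable g μ := hφ.aestronglyMeasurable.mul (humeas.sub hubarmeas)
  have hgint : Integrable g μ := by
    refine (hφ.norm.const_mul 2).mono' hgm ?_
    filter_upwards [hu1, hubar1] with x h1 h2
    have : |u x - ubar x| ≤ 2 := (abs_sub _ _).trans (by linarith)
    calc ‖g x‖ = |φ x| * |u x - ubar x| := by simp [hgdef, abs_mul]
      _ ≤ |φ x| * 2 := by gcongr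
      _ = 2 * ‖φ x‖ := by rw [Real.norm_eq_abs]; ring
  set g' := hgm.mk g with hg'def
  have hg'sm : StronglyMeasurable g' := hgm.stronglyMeasurable_mk
  have hgg' : g =ᵐ[μ] g' := hgm.ae_eq_mk
  classical
  set S : Set (EuclideanSpace ℝ (Fin d)) := {x | 0 ≤ g' x} with hSdef
  have hS : MeasurableSet S := measurableSet_le measurable_const hg'sm.measurable
  set v := S.piecewise ubar u with hvdef
  have hvm : AEStronglyMeasurable v μ :=
    AEStronglyMeasurable.piecewise hS (hubarmeas.restrict) (humeas.restrict)
  have hv1 : ∀ᵐ x ∂μ, |v x| ≤ 1 := by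
    filter_upwards [hu1, hubar1] with x h1 h2
    by_cases hx : x ∈ S
    · simpa [hvdef, Set.piecewise_eq_of_mem _ _ _ hx]
    · simpa [hvdef, Set.piecewise_eq_of_notMem _ _ _ hx]
  have hkey : (fun x => φ x * (v x - ubar x)) =ᵐ[μ] fun x => min (g' x) 0 := by
    filter_upwards [hgg'] with x hx
    by_cases hxS : x ∈ S
    · have h0 : (0:ℝ) ≤ g' x := hxS
      simp [hvdef, Set.piecewise_eq_of_mem _ _ _ hxS, min_eq_right h0]
    · have h0 : g' x < 0 := lt_of_not_ge hxS
      have : v x = u x := Set.piecewise_eq_of_notMem _ _ _ hxS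
      rw [this]
      have : φ x * (u x - ubar x) = g x := rfl
      rw [this, hx, min_eq_left h0.le]
  have hmint : Integrable (fun x => min (g' x) 0) μ := by
    refine hgint.abs.mono' ((hg'sm.measurable.min measurable_const).aestronglyMeasurable) ?_
    filter_upwards [hgg'] with x hx
    rw [Real.norm_eq_abs, ← hx]
    rcases le_or_gt (g x) 0 with h | h
    · rw [min_eq_left h]
    · rw [min_eq_right h.le]; simp
  have hint0 : 0 ≤ ∫ x, min (g' x) 0 ∂μ := by
    have := hFON v hvm hv1
    rwa [show (∫ x in Ω, φ x * (v x - ubar x)) = ∫ x, min (g' x) 0 ∂μ from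
      integral_congr_ae hkey] at this
  have hmle : ∀ x, min (g' x) 0 ≤ 0 := fun x => min_le_right _ _
  have hzero : (fun x => min (g' x) 0) =ᵐ[μ] 0 := by
    have hneg : 0 ≤ᵐ[μ] fun x => -(min (g' x) 0) :=
      Filter.Eventually.of_forall fun x => by simpa using hmle x
    have hintneg : ∫ x, -(min (g' x) 0) ∂μ = 0 := by
      rw [integral_neg]
      have h2 : 0 ≤ ∫ x, -(min (g' x) 0) ∂μ := integral_nonneg_of_ae hneg
      rw [integral_neg] at h2
      linarith
    have := (integral_eq_zero_iff_of_nonneg_ae hneg hmint.neg).mp hintneg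
    filter_upwards [this] with x hx
    simpa using hx
  have hge : ∀ᵐ x ∂μ, 0 ≤ g x := by
    filter_upwards [hgg', hzero] with x hx hz
    rw [hx]
    by_contra h
    push_neg at h
    rw [min_eq_left h.le] at hz
    simp at hz
    linarith [hz]
  refine ⟨hge, ?_⟩
  refine integral_congr_ae ?_
  filter_upwards [hge] with x hx
  exact (abs_of_nonneg hx).symm
end
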